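/- arXiv:0803.0566 — 6 statements merged into one kernel-verified Lean document; each statement's English description precedes it below -/
import Mathlib

section
/- Let q : ℝ → ℝ be measurable with ∫₀^π q(t)² dt < ∞, let h, H, H₁, H₂ ∈ ℝ and set ρ := H·H₁ − H₂. Let λ, λₙ ∈ ℝ and kₙ ∈ ℝ with kₙ ≠ 0. Suppose ψ is a solution of −y'' + q y = λ y on [0,π] with ψ(π) = −λ + H₁ and ψ'(π) = λ·H − H₂, and φₙ is a solution of −y'' + q y = λₙ y on [0,π] with φₙ(0) = 1, φₙ'(0) = h, kₙ·φₙ(π) = −λₙ + H₁ and kₙ·φₙ'(π) = λₙ·H − H₂. Then ψ'(0) − h·ψ(0) = (λ − λₙ)·( ∫₀^π ψ(x)·φₙ(x) dx + ρ/kₙ ). -/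
open Real MeasureTheory Set intervalIntegral

/-- `y` (with derivative `y'`) is a solution of `-y'' + q y = λ y` on `[0, π]`
in the Carathéodory sense. -/
def IsSol (q : ℝ → ℝ) (lam : ℝ) (y y' : ℝ → ℝ) : Prop :=
  ContinuousOn y' (Set.Icc 0 π) ∧
  (∀ x ∈ Set.Icc (0:ℝ) π, HasDerivAt y (y' x) x) ∧
  ∀ x ∈ Set.Icc (0:ℝ) π, y' x = y' 0 + ∫ t in (0:ℝ)..x, (q t - lam) * y t

/-- FTC on a subinterval of `[0,π]`. -/
lemma ftc_sub (u u' : ℝ → ℝ) (a b : ℝ) (ha : 0 ≤ a) (hab : a ≤ b) (hb : b ≤ π)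
    (hu : ∀ x ∈ Set.Icc (0:ℝ) π, HasDerivAt u (u' x) x)
    (hu' : ContinuousOn u' (Set.Icc 0 π)) :
    ∫ x in a..b, u' x = u b - u a := by
  have hsub : Set.uIcc a b ⊆ Set.Icc (0:ℝ) π := by
    rw [Set.uIcc_of_le hab]
    exact Set.Icc_subset_Icc ha hb
  exact integral_eq_sub_of_hasDerivAt (fun x hx => hu x (hsub hx))
    ((hu'.mono hsub).intervalIntegrable)

/-- Integration by parts, one factor C¹ and one factor an integrable function,
proved via Fubini. -/
lemma parts (u u' g : ℝ → ℝ)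
    (hu : ∀ x ∈ Set.Icc (0:ℝ) π, HasDerivAt u (u' x) x)
    (hu' : ContinuousOn u' (Set.Icc 0 π))
    (hg : IntegrableOn g (Set.Icc 0 π)) :
    (∫ t in (0:ℝ)..π, u t * g t)
      = u π * (∫ t in (0:ℝ)..π, g t) - ∫ x in (0:ℝ)..π, u' x * (∫ t in (0:ℝ)..x, g t) := by
  have hπ : (0:ℝ) ≤ π := pi_pos.le
  have hucont : ContinuousOn u (Set.Icc 0 π) :=
    fun x hx => (hu x hx).continuousAt.continuousWithinAt
  set ν : Measure ℝ := volume.restrict (Set.Ioc 0 π) with hν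
  have hgν : Integrable g ν := hg.mono_set Set.Ioc_subset_Icc_self
  have hu'ν : Integrable u' ν :=
    (hu'.integrableOn_Icc).mono_set Set.Ioc_subset_Icc_self
  set F : ℝ × ℝ → ℝ := ({z : ℝ × ℝ | z.1 ≤ z.2}).indicator (fun z => g z.1 * u' z.2) with hF
  have hFint : Integrable F (ν.prod ν) :=
    (hgν.mul_prod hu'ν).indicator (measurableSet_le measurable_fst measurable_snd)
  have hswap : ∫ t, (∫ x, F (t, x) ∂ν) ∂ν = ∫ x, (∫ t, F (t, x) ∂ν) ∂ν :=
    MeasureTheory.integral_integral_swap hFint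
  -- left side
  have hL : ∫ t, (∫ x, F (t, x) ∂ν) ∂ν = ∫ t in Set.Ioc (0:ℝ) π, g t * (u π - u t) := by
    refine setIntegral_congr_fun measurableSet_Ioc (fun t ht => ?_)
    have h1 : (fun x => F (t, x)) = (Set.Ici t).indicator (fun x => g t * u' x) := by
      funext x
      by_cases hc : t ≤ x <;> simp [hF, Set.indicator, hc]
    rw [h1, MeasureTheory.integral_indicator measurableSet_Ici, hν,
      Measure.restrict_restrict measurableSet_Ici]
    have h2 : Set.Ici t ∩ Set.Ioc 0 π = Set.Icc t π := by
      ext x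
      simp only [Set.mem_inter_iff, Set.mem_Ici, Set.mem_Ioc, Set.mem_Icc]
      constructor
      · rintro ⟨h1, h2, h3⟩; exact ⟨h1, h3⟩
      · rintro ⟨h1, h2⟩; exact ⟨h1, lt_of_lt_of_le ht.1 h1, h2⟩
    rw [h2, ← Measure.restrict_congr_set Ioc_ae_eq_Icc, MeasureTheory.integral_const_mul,
      ← intervalIntegral.integral_of_le ht.2, ftc_sub u u' t π ht.1.le ht.2 le_rfl hu hu']
  -- right side
  have hR : ∫ x, (∫ t, F (t, x) ∂ν) ∂ν
      = ∫ x in Set.Ioc (0:ℝ) π, u' x * (∫ t in (0:ℝ)..x, g t) := by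
    refine setIntegral_congr_fun measurableSet_Ioc (fun x hx => ?_)
    have h1 : (fun t => F (t, x)) = (Set.Iic x).indicator (fun t => g t * u' x) := by
      funext t
      by_cases hc : t ≤ x <;> simp [hF, Set.indicator, hc]
    rw [h1, MeasureTheory.integral_indicator measurableSet_Iic, hν,
      Measure.restrict_restrict measurableSet_Iic]
    have h2 : Set.Iic x ∩ Set.Ioc 0 π = Set.Ioc 0 x := by
      ext t
      simp only [Set.mem_inter_iff, Set.mem_Iic, Set.mem_Ioc]
      constructor
      · rintro ⟨h1, h2, h3⟩; exact ⟨h2, h1⟩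
      · rintro ⟨h1, h2⟩; exact ⟨h2, h1, h2.trans hx.2⟩
    rw [h2, MeasureTheory.integral_mul_const, ← intervalIntegral.integral_of_le hx.1.le, mul_comm]
  -- expand left side
  have hug : IntegrableOn (fun t => u t * g t) (Set.Ioc 0 π) :=
    (hg.continuousOn_mul hucont isCompact_Icc).mono_set Set.Ioc_subset_Icc_self
  have hL2 : ∫ t in Set.Ioc (0:ℝ) π, g t * (u π - u t)
      = u π * (∫ t in Set.Ioc (0:ℝ) π, g t) - ∫ t in Set.Ioc (0:ℝ) π, u t * g t := by
    have : ∀ t, g t * (u π - u t) = u π * g t - u t * g t := fun t => by ring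
    simp_rw [this]
    rw [integral_sub (hgν.const_mul _) hug, MeasureTheory.integral_const_mul]
  have := hL ▸ hR ▸ hswap
  rw [hL2] at this
  rw [intervalIntegral.integral_of_le hπ, intervalIntegral.integral_of_le hπ,
    intervalIntegral.integral_of_le hπ]
  linarith [this]

set_option maxHeartbeats 1600000 in
theorem stmt_0
    (q : ℝ → ℝ) (hq_meas : Measurable q)
    (hq_L2 : IntegrableOn (fun t => (q t) ^ 2) (Set.Icc 0 π))
    (h H H₁ H₂ : ℝ) (ρ : ℝ) (hρ : ρ = H * H₁ - H₂)
    (lam lamn kn : ℝ) (hkn : kn ≠ 0)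
    (ψ ψ' : ℝ → ℝ) (hψ : IsSol q lam ψ ψ')
    (hψπ : ψ π = -lam + H₁) (hψ'π : ψ' π = lam * H - H₂)
    (φ φ' : ℝ → ℝ) (hφ : IsSol q lamn φ φ')
    (hφ0 : φ 0 = 1) (hφ'0 : φ' 0 = h)
    (hφπ : kn * φ π = -lamn + H₁) (hφ'π : kn * φ' π = lamn * H - H₂) :
    ψ' 0 - h * ψ 0 = (lam - lamn) * ((∫ x in (0:ℝ)..π, ψ x * φ x) + ρ / kn) := by
  have hπ : (0:ℝ) ≤ π := pi_pos.le
  have hπmem : π ∈ Set.Icc (0:ℝ) π := ⟨hπ, le_rfl⟩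
  have h0mem : (0:ℝ) ∈ Set.Icc (0:ℝ) π := ⟨le_rfl, hπ⟩
  -- q is integrable
  have hconst1 : IntegrableOn (fun _ : ℝ => (1:ℝ)) (Set.Icc 0 π) :=
    integrableOn_const measure_Icc_lt_top.ne
  have hbound : IntegrableOn (fun t => q t ^ 2 + 1) (Set.Icc 0 π) := hq_L2.add hconst1
  have hq_int : IntegrableOn q (Set.Icc 0 π) := by
    refine Integrable.mono' hbound
      (hq_meas.aestronglyMeasurable) (Filter.Eventually.of_forall fun t => ?_)
    simp only [Real.norm_eq_abs]
    nlinarith [sq_nonneg (q t), sq_nonneg (|q t| - 1), abs_nonneg (q t), sq_abs (q t)]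
  have hψcont : ContinuousOn ψ (Set.Icc 0 π) :=
    fun x hx => (hψ.2.1 x hx).continuousAt.continuousWithinAt
  have hφcont : ContinuousOn φ (Set.Icc 0 π) :=
    fun x hx => (hφ.2.1 x hx).continuousAt.continuousWithinAt
  -- the RHS functions of the ODEs are integrable
  have hclam : IntegrableOn (fun _ : ℝ => lam) (Set.Icc 0 π) :=
    integrableOn_const measure_Icc_lt_top.ne
  have hclamn : IntegrableOn (fun _ : ℝ => lamn) (Set.Icc 0 π) :=
    integrableOn_const measure_Icc_lt_top.ne
  have hqlam : IntegrableOn (fun t => q t - lam) (Set.Icc 0 π) := hq_int.sub hclam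
  have hqlamn : IntegrableOn (fun t => q t - lamn) (Set.Icc 0 π) := hq_int.sub hclamn
  have hf_int : IntegrableOn (fun t => (q t - lam) * ψ t) (Set.Icc 0 π) :=
    hqlam.mul_continuousOn hψcont isCompact_Icc
  have hg_int : IntegrableOn (fun t => (q t - lamn) * φ t) (Set.Icc 0 π) :=
    hqlamn.mul_continuousOn hφcont isCompact_Icc
  -- integration by parts, twice
  have hA := parts ψ ψ' (fun t => (q t - lamn) * φ t) hψ.2.1 hψ.1 hg_int
  have hB := parts φ φ' (fun t => (q t - lam) * ψ t) hφ.2.1 hφ.1 hf_int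
  -- rewrite the indefinite integrals using the ODE
  have hGφ : ∀ x ∈ Set.Icc (0:ℝ) π, (∫ t in (0:ℝ)..x, (q t - lamn) * φ t) = φ' x - h := by
    intro x hx
    have := hφ.2.2 x hx
    rw [this, hφ'0]; ring
  have hGψ : ∀ x ∈ Set.Icc (0:ℝ) π, (∫ t in (0:ℝ)..x, (q t - lam) * ψ t) = ψ' x - ψ' 0 := by
    intro x hx
    have := hψ.2.2 x hx
    rw [this]; ring
  rw [hGφ π hπmem] at hA
  rw [hGψ π hπmem] at hB
  have hA2 : (∫ x in (0:ℝ)..π, ψ' x * (∫ t in (0:ℝ)..x, (q t - lamn) * φ t))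
      = (∫ x in (0:ℝ)..π, ψ' x * (φ' x - h)) := by
    refine intervalIntegral.integral_congr (fun x hx => ?_)
    rw [Set.uIcc_of_le hπ] at hx
    rw [hGφ x hx]
  have hB2 : (∫ x in (0:ℝ)..π, φ' x * (∫ t in (0:ℝ)..x, (q t - lam) * ψ t))
      = (∫ x in (0:ℝ)..π, φ' x * (ψ' x - ψ' 0)) := by
    refine intervalIntegral.integral_congr (fun x hx => ?_)
    rw [Set.uIcc_of_le hπ] at hx
    rw [hGψ x hx]
  rw [hA2] at hA
  rw [hB2] at hB
  -- interval integrability of continuous pieces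
  have hII : ∀ (v : ℝ → ℝ), ContinuousOn v (Set.Icc 0 π) → IntervalIntegrable v volume 0 π := by
    intro v hv
    rw [intervalIntegrable_iff_integrableOn_Icc_of_le hπ]
    exact hv.integrableOn_Icc
  have hψ'II := hII ψ' hψ.1
  have hφ'II := hII φ' hφ.1
  have hψ'φ'II : IntervalIntegrable (fun x => ψ' x * φ' x) volume 0 π :=
    hII _ (hψ.1.mul hφ.1)
  -- split the parts integrals
  have hA3 : (∫ x in (0:ℝ)..π, ψ' x * (φ' x - h))
      = (∫ x in (0:ℝ)..π, ψ' x * φ' x) - h * (ψ π - ψ 0) := by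
    have e : ∀ x, ψ' x * (φ' x - h) = ψ' x * φ' x - h * ψ' x := fun x => by ring
    simp_rw [e]
    rw [intervalIntegral.integral_sub hψ'φ'II (hψ'II.const_mul h),
      intervalIntegral.integral_const_mul,
      ftc_sub ψ ψ' 0 π le_rfl hπ le_rfl hψ.2.1 hψ.1]
  have hB3 : (∫ x in (0:ℝ)..π, φ' x * (ψ' x - ψ' 0))
      = (∫ x in (0:ℝ)..π, ψ' x * φ' x) - ψ' 0 * (φ π - φ 0) := by
    have e : ∀ x, φ' x * (ψ' x - ψ' 0) = ψ' x * φ' x - ψ' 0 * φ' x := fun x => by ring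
    simp_rw [e]
    rw [intervalIntegral.integral_sub hψ'φ'II (hφ'II.const_mul _),
      intervalIntegral.integral_const_mul,
      ftc_sub φ φ' 0 π le_rfl hπ le_rfl hφ.2.1 hφ.1]
  rw [hA3] at hA
  rw [hB3] at hB
  -- Lagrange identity: subtract
  have hfII : IntervalIntegrable (fun t => φ t * ((q t - lam) * ψ t)) volume 0 π := by
    rw [intervalIntegrable_iff_integrableOn_Icc_of_le hπ]
    exact hf_int.continuousOn_mul hφcont isCompact_Icc
  have hgII : IntervalIntegrable (fun t => ψ t * ((q t - lamn) * φ t)) volume 0 π := by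
    rw [intervalIntegrable_iff_integrableOn_Icc_of_le hπ]
    exact hg_int.continuousOn_mul hψcont isCompact_Icc
  have hLag : (∫ t in (0:ℝ)..π, ψ t * ((q t - lamn) * φ t))
      - (∫ t in (0:ℝ)..π, φ t * ((q t - lam) * ψ t))
      = (lam - lamn) * ∫ x in (0:ℝ)..π, ψ x * φ x := by
    rw [← intervalIntegral.integral_sub hgII hfII, ← intervalIntegral.integral_const_mul]
    exact intervalIntegral.integral_congr (fun t _ => by ring)
  -- boundary term at π
  have hbd : ψ π * φ' π - φ π * ψ' π = -(lam - lamn) * ρ / kn := by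
    have : kn * (ψ π * φ' π - φ π * ψ' π) = -(lam - lamn) * ρ := by
      have e1 : ψ π * (kn * φ' π) - (kn * φ π) * ψ' π = kn * (ψ π * φ' π - φ π * ψ' π) := by ring
      rw [← e1, hφ'π, hφπ, hψπ, hψ'π, hρ]; ring
    field_simp
    linarith [this]
  rw [hA, hB, hφ0] at hLag
  -- finish
  have hkey : ψ' 0 - h * ψ 0
      = (lam - lamn) * (∫ x in (0:ℝ)..π, ψ x * φ x) + (lam - lamn) * ρ / kn := by
    linear_combination hLag - hbd
  rw [hkey]; ring
end

section
/- Let q : ℝ → ℝ be measurable with ∫₀^π q(t)² dt < ∞, let h, H, H₁, H₂ ∈ ℝ with ρ := H·H₁ − H₂ > 0. Suppose ψ : [0,π] × ℝ → ℝ is such that for every λ ∈ ℝ, ψ(·,λ) is a solution of −y'' + q y = λ y on [0,π] with ψ(π,λ) = −λ + H₁ and ∂ₓψ(π,λ) = λ·H − H₂, and define χ(λ) := ∂ₓψ(0,λ) − h·ψ(0,λ). Let λₙ ∈ ℝ, kₙ ≠ 0, and let φₙ be a solution of −y'' + q y = λₙ y on [0,π] with φₙ(0) = 1, φₙ'(0)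 = h and ψ(x,λₙ) = kₙ·φₙ(x) for all x ∈ [0,π]. If the map λ ↦ ∫₀^π ψ(x,λ)·φₙ(x) dx is continuous at λₙ, then χ is differentiable at λₙ with derivative χ'(λₙ) = kₙ·γₙ, where γₙ := ∫₀^π φₙ(x)² dx + (φₙ'(π) + H·φₙ(π))²/ρ. -/
open Real MeasureTheory Set intervalIntegral

lemma fubini_tri (f g : ℝ → ℝ) (hf : IntegrableOn f (Set.Icc 0 π))
    (hg : IntegrableOn g (Set.Icc 0 π)) :
    (∫ x in (0:ℝ)..π, f x * ∫ t in (0:ℝ)..x, g t)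
      + (∫ x in (0:ℝ)..π, g x * ∫ t in (0:ℝ)..x, f t)
    = (∫ x in (0:ℝ)..π, f x) * (∫ x in (0:ℝ)..π, g x) := by
  have hpi : (0:ℝ) ≤ π := pi_pos.le
  have hfI : IntegrableOn f (Set.Ioc 0 π) := hf.mono_set Ioc_subset_Icc_self
  have hgI : IntegrableOn g (Set.Ioc 0 π) := hg.mono_set Ioc_subset_Icc_self
  set μ := volume.restrict (Set.Ioc (0:ℝ) π) with hμ
  have hprod : Integrable (fun p : ℝ × ℝ => f p.1 * g p.2) (μ.prod μ) :=
    Integrable.mul_prod hfI hgI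
  have hs1 : MeasurableSet {p : ℝ × ℝ | p.2 ≤ p.1} :=
    (isClosed_le continuous_snd continuous_fst).measurableSet
  have hs2 : MeasurableSet {p : ℝ × ℝ | p.1 < p.2} :=
    (isOpen_lt continuous_fst continuous_snd).measurableSet
  set F1 : ℝ × ℝ → ℝ := ({p : ℝ × ℝ | p.2 ≤ p.1}).indicator (fun p => f p.1 * g p.2)
  set F2 : ℝ × ℝ → ℝ := ({p : ℝ × ℝ | p.1 < p.2}).indicator (fun p => f p.1 * g p.2)
  have hF1 : Integrable F1 (μ.prod μ) := hprod.indicator hs1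
  have hF2 : Integrable F2 (μ.prod μ) := hprod.indicator hs2
  have hsum : ∀ p : ℝ × ℝ, F1 p + F2 p = f p.1 * g p.2 := by
    intro p
    by_cases hc : p.2 ≤ p.1
    · simp [F1, F2, Set.indicator_of_mem, Set.indicator_of_notMem, hc, not_lt.2 hc]
    · simp [F1, F2, Set.indicator_of_mem, Set.indicator_of_notMem, hc, lt_of_not_ge hc]
  -- term 1
  have t1 : (∫ x in (0:ℝ)..π, f x * ∫ t in (0:ℝ)..x, g t) = ∫ p, F1 p ∂(μ.prod μ) := by
    rw [← MeasureTheory.integral_integral (f := fun x y => F1 (x, y)) hF1]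
    rw [intervalIntegral.integral_of_le hpi]
    refine setIntegral_congr_fun measurableSet_Ioc (fun x hx => ?_)
    have : (∫ y, F1 (x, y) ∂μ) = ∫ y in Set.Ioc 0 π ∩ Set.Iic x, f x * g y := by
      have : (fun y => F1 (x, y)) = (Set.Iic x).indicator (fun y => f x * g y) := by
        ext y; by_cases hy : y ≤ x
        · simp [F1, Set.indicator_of_mem, hy, Set.mem_Iic.2 hy]
        · simp [F1, Set.indicator_of_notMem, hy]
      rw [this, hμ, setIntegral_indicator measurableSet_Iic]
    rw [this]
    have he : Set.Ioc (0:ℝ) π ∩ Set.Iic x = Set.Ioc 0 x := by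
      ext y; simp only [Set.mem_inter_iff, Set.mem_Ioc, Set.mem_Iic]
      exact ⟨fun ⟨⟨a, _⟩, c⟩ => ⟨a, c⟩, fun ⟨a, b⟩ => ⟨⟨a, b.trans hx.2⟩, b⟩⟩
    rw [he, intervalIntegral.integral_of_le hx.1.le, MeasureTheory.integral_const_mul]
  -- term 2
  have t2 : (∫ x in (0:ℝ)..π, g x * ∫ t in (0:ℝ)..x, f t) = ∫ p, F2 p ∂(μ.prod μ) := by
    rw [← MeasureTheory.integral_integral (f := fun x y => F2 (x, y)) hF2,
      MeasureTheory.integral_integral_swap (f := fun x y => F2 (x, y)) hF2]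
    rw [intervalIntegral.integral_of_le hpi]
    refine setIntegral_congr_fun measurableSet_Ioc (fun y hy => ?_)
    have : (∫ x, F2 (x, y) ∂μ) = ∫ x in Set.Ioc 0 π ∩ Set.Iio y, f x * g y := by
      have : (fun x => F2 (x, y)) = (Set.Iio y).indicator (fun x => f x * g y) := by
        ext x; by_cases hx : x < y
        · simp [F2, Set.indicator_of_mem, hx, Set.mem_Iio.2 hx]
        · simp [F2, Set.indicator_of_notMem, hx]
      rw [this, hμ, setIntegral_indicator measurableSet_Iio]
    rw [this]
    have he : Set.Ioc (0:ℝ) π ∩ Set.Iio y = Set.Ioo 0 y := by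
      ext x; simp only [Set.mem_inter_iff, Set.mem_Ioc, Set.mem_Ioo]
      exact ⟨fun ⟨⟨a, _⟩, c⟩ => ⟨a, c⟩, fun ⟨a, b⟩ => ⟨⟨a, b.le.trans hy.2⟩, b⟩⟩
    rw [he, intervalIntegral.integral_of_le hy.1.le, MeasureTheory.integral_Ioc_eq_integral_Ioo,
      mul_comm]
    exact (MeasureTheory.integral_mul_const _ _).symm
  rw [t1, t2, ← MeasureTheory.integral_add hF1 hF2]
  have : (fun p : ℝ × ℝ => F1 p + F2 p) = fun p => f p.1 * g p.2 := funext hsum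
  rw [this, MeasureTheory.integral_prod_mul,
    intervalIntegral.integral_of_le hpi, intervalIntegral.integral_of_le hpi]

lemma ibp_aux (f v v' U : ℝ → ℝ) (hf : IntegrableOn f (Set.Icc 0 π))
    (hv : ∀ x ∈ Set.Icc (0:ℝ) π, HasDerivAt v (v' x) x)
    (hv' : ContinuousOn v' (Set.Icc 0 π))
    (hU : ∀ x ∈ Set.Icc (0:ℝ) π, U x = U 0 + ∫ t in (0:ℝ)..x, f t) :
    (∫ x in (0:ℝ)..π, f x * v x) + (∫ x in (0:ℝ)..π, U x * v' x)
      = U π * v π - U 0 * v 0 := by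
  have hpi : (0:ℝ) ≤ π := pi_pos.le
  have huIcc : Set.uIcc (0:ℝ) π = Set.Icc 0 π := Set.uIcc_of_le hpi
  have hv'int : IntervalIntegrable v' volume 0 π := by
    apply ContinuousOn.intervalIntegrable; rwa [huIcc]
  have hfint : IntervalIntegrable f volume 0 π := by
    apply MeasureTheory.IntegrableOn.intervalIntegrable; rwa [huIcc]
  have hv'Icc : IntegrableOn v' (Set.Icc 0 π) := hv'.integrableOn_compact isCompact_Icc
  -- FTC for v
  have hvFTC : ∀ x ∈ Set.Icc (0:ℝ) π, v x = v 0 + ∫ t in (0:ℝ)..x, v' t := by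
    intro x hx
    have : ∫ t in (0:ℝ)..x, v' t = v x - v 0 := by
      apply intervalIntegral.integral_eq_sub_of_hasDerivAt
      · intro t ht
        apply hv
        have : Set.uIcc (0:ℝ) x ⊆ Set.Icc 0 π := by
          rw [Set.uIcc_of_le hx.1]; exact Set.Icc_subset_Icc le_rfl hx.2
        exact this ht
      · refine hv'int.mono_set ?_
        rw [huIcc, Set.uIcc_of_le hx.1]
        exact Set.Icc_subset_Icc le_rfl hx.2
    linarith
  -- continuity of primitives
  have hPf : ContinuousOn (fun x => ∫ t in (0:ℝ)..x, f t) (Set.Icc 0 π) := by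
    have := intervalIntegral.continuousOn_primitive_interval (a := (0:ℝ)) (b := π)
      (μ := volume) (f := f) (by rwa [huIcc])
    rwa [huIcc] at this
  have hPv' : ContinuousOn (fun x => ∫ t in (0:ℝ)..x, v' t) (Set.Icc 0 π) := by
    have := intervalIntegral.continuousOn_primitive_interval (a := (0:ℝ)) (b := π)
      (μ := volume) (f := v') (by rwa [huIcc])
    rwa [huIcc] at this
  -- integrability of cross terms
  have h1 : IntervalIntegrable (fun x => f x * ∫ t in (0:ℝ)..x, v' t) volume 0 π := by
    apply MeasureTheory.IntegrableOn.intervalIntegrable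
    rw [huIcc]; exact hf.mul_continuousOn hPv' isCompact_Icc
  have h2 : IntervalIntegrable (fun x => v' x * ∫ t in (0:ℝ)..x, f t) volume 0 π := by
    apply MeasureTheory.IntegrableOn.intervalIntegrable
    rw [huIcc]; exact hv'Icc.mul_continuousOn hPf isCompact_Icc
  have e1 : (∫ x in (0:ℝ)..π, f x * v x)
      = (∫ x in (0:ℝ)..π, f x) * v 0 + ∫ x in (0:ℝ)..π, f x * ∫ t in (0:ℝ)..x, v' t := by
    have : (∫ x in (0:ℝ)..π, f x * v x)
        = ∫ x in (0:ℝ)..π, (f x * v 0 + f x * ∫ t in (0:ℝ)..x, v' t) := by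
      apply intervalIntegral.integral_congr
      intro x hx
      rw [huIcc] at hx
      simp only
      rw [hvFTC x hx]; ring
    rw [this, intervalIntegral.integral_add (hfint.mul_const _) h1,
      intervalIntegral.integral_mul_const]
  have e2 : (∫ x in (0:ℝ)..π, U x * v' x)
      = U 0 * (∫ x in (0:ℝ)..π, v' x) + ∫ x in (0:ℝ)..π, v' x * ∫ t in (0:ℝ)..x, f t := by
    have : (∫ x in (0:ℝ)..π, U x * v' x)
        = ∫ x in (0:ℝ)..π, (U 0 * v' x + v' x * ∫ t in (0:ℝ)..x, f t) := by
      apply intervalIntegral.integral_congr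
      intro x hx
      rw [huIcc] at hx
      simp only
      rw [hU x hx]; ring
    rw [this, intervalIntegral.integral_add (hv'int.const_mul _) h2,
      intervalIntegral.integral_const_mul]
  have hfub' := fubini_tri f v' hf hv'Icc
  have hUπ : U π = U 0 + ∫ t in (0:ℝ)..π, f t := hU π ⟨hpi, le_rfl⟩
  have hvπ : v π = v 0 + ∫ t in (0:ℝ)..π, v' t := hvFTC π ⟨hpi, le_rfl⟩
  have hv'eq : (∫ x in (0:ℝ)..π, v' x) = v π - v 0 := by linarith
  have hfeq : (∫ x in (0:ℝ)..π, f x) = U π - U 0 := by linarith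
  rw [e1, e2]
  rw [hfeq, hv'eq] at hfub' ⊢
  linear_combination hfub'

theorem stmt_1
    (q : ℝ → ℝ) (hq_meas : Measurable q)
    (hq_L2 : IntegrableOn (fun t => (q t) ^ 2) (Set.Icc 0 π))
    (h H H₁ H₂ : ℝ) (ρ : ℝ) (hρ : ρ = H * H₁ - H₂) (hρpos : 0 < ρ)
    (ψ ψx : ℝ → ℝ → ℝ)
    (hψ : ∀ lam : ℝ, IsSol q lam (ψ lam) (ψx lam))
    (hψπ : ∀ lam : ℝ, ψ lam π = -lam + H₁)
    (hψxπ : ∀ lam : ℝ, ψx lam π = lam * H - H₂)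
    (χ : ℝ → ℝ) (hχ : ∀ lam : ℝ, χ lam = ψx lam 0 - h * ψ lam 0)
    (lamn kn : ℝ) (hkn : kn ≠ 0)
    (φ φ' : ℝ → ℝ) (hφ : IsSol q lamn φ φ')
    (hφ0 : φ 0 = 1) (hφ'0 : φ' 0 = h)
    (hk : ∀ x ∈ Set.Icc (0:ℝ) π, ψ lamn x = kn * φ x)
    (hcont : ContinuousAt (fun lam => ∫ x in (0:ℝ)..π, ψ lam x * φ x) lamn)
    (γn : ℝ)
    (hγn : γn = (∫ x in (0:ℝ)..π, (φ x) ^ 2) + (φ' π + H * φ π) ^ 2 / ρ) :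
    HasDerivAt χ (kn * γn) lamn := by
  have hpi : (0:ℝ) ≤ π := pi_pos.le
  have hπIcc : π ∈ Set.Icc (0:ℝ) π := ⟨hpi, le_rfl⟩
  have h0Icc : (0:ℝ) ∈ Set.Icc (0:ℝ) π := ⟨le_rfl, hpi⟩
  have huIcc : Set.uIcc (0:ℝ) π = Set.Icc 0 π := Set.uIcc_of_le hpi
  -- q is integrable
  have hq_int : IntegrableOn q (Set.Icc 0 π) := by
    have hb : IntegrableOn (fun t => q t ^ 2 + 1) (Set.Icc 0 π) :=
      hq_L2.add (integrableOn_const measure_Icc_lt_top.ne)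
    refine Integrable.mono' hb (hq_meas.aestronglyMeasurable.restrict) ?_
    refine Filter.Eventually.of_forall (fun t => ?_)
    rw [Real.norm_eq_abs]
    nlinarith [sq_nonneg (|q t| - 1), sq_abs (q t), abs_nonneg (q t)]
  -- continuity of solutions
  have hcφ : ContinuousOn φ (Set.Icc 0 π) :=
    fun x hx => (hφ.2.1 x hx).continuousAt.continuousWithinAt
  have hcψ : ∀ lam, ContinuousOn (ψ lam) (Set.Icc 0 π) :=
    fun lam x hx => ((hψ lam).2.1 x hx).continuousAt.continuousWithinAt
  -- integrability of the RHS functions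
  have hint : ∀ (lam : ℝ) (y : ℝ → ℝ), ContinuousOn y (Set.Icc 0 π) →
      IntegrableOn (fun t => (q t - lam) * y t) (Set.Icc 0 π) := by
    intro lam y hy
    have hqc : IntegrableOn (fun t => q t - lam) (Set.Icc 0 π) :=
      hq_int.sub (integrableOn_const measure_Icc_lt_top.ne)
    exact hqc.mul_continuousOn hy isCompact_Icc
  have hfψ : ∀ lam, IntegrableOn (fun t => (q t - lam) * ψ lam t) (Set.Icc 0 π) :=
    fun lam => hint lam (ψ lam) (hcψ lam)
  have hgφ : IntegrableOn (fun t => (q t - lamn) * φ t) (Set.Icc 0 π) :=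
    hint lamn φ hcφ
  -- Green's identity
  have green : ∀ lam : ℝ,
      ψx lam π * φ π - ψ lam π * φ' π - (ψx lam 0 * φ 0 - ψ lam 0 * φ' 0)
        = (lamn - lam) * ∫ x in (0:ℝ)..π, ψ lam x * φ x := by
    intro lam
    have ibp1 := ibp_aux (fun t => (q t - lam) * ψ lam t) φ φ' (ψx lam) (hfψ lam)
      hφ.2.1 hφ.1 (hψ lam).2.2
    have ibp2 := ibp_aux (fun t => (q t - lamn) * φ t) (ψ lam) (ψx lam) φ' hgφ
      (hψ lam).2.1 (hψ lam).1 hφ.2.2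
    have hB : (∫ x in (0:ℝ)..π, ψx lam x * φ' x) = ∫ x in (0:ℝ)..π, φ' x * ψx lam x := by
      apply intervalIntegral.integral_congr
      intro x _; exact mul_comm _ _
    -- interval integrability of products
    have i1 : IntervalIntegrable (fun x => (q x - lam) * ψ lam x * φ x) volume 0 π := by
      apply MeasureTheory.IntegrableOn.intervalIntegrable
      rw [huIcc]; exact (hfψ lam).mul_continuousOn hcφ isCompact_Icc
    have i2 : IntervalIntegrable (fun x => (q x - lamn) * φ x * ψ lam x) volume 0 π := by
      apply MeasureTheory.IntegrableOn.intervalIntegrable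
      rw [huIcc]; exact hgφ.mul_continuousOn (hcψ lam) isCompact_Icc
    have hsub : (∫ x in (0:ℝ)..π, (q x - lam) * ψ lam x * φ x)
        - (∫ x in (0:ℝ)..π, (q x - lamn) * φ x * ψ lam x)
        = (lamn - lam) * ∫ x in (0:ℝ)..π, ψ lam x * φ x := by
      rw [← intervalIntegral.integral_sub i1 i2, ← intervalIntegral.integral_const_mul]
      apply intervalIntegral.integral_congr
      intro x _; ring
    calc ψx lam π * φ π - ψ lam π * φ' π - (ψx lam 0 * φ 0 - ψ lam 0 * φ' 0)
        = (ψx lam π * φ π - ψx lam 0 * φ 0) - (φ' π * ψ lam π - φ' 0 * ψ lam 0) := by ring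
      _ = (lamn - lam) * ∫ x in (0:ℝ)..π, ψ lam x * φ x := by
          rw [← ibp1, ← ibp2, ← hsub, hB]; ring
  -- formula for χ
  have χform : ∀ lam : ℝ, χ lam = (lam * H - H₂) * φ π - (-lam + H₁) * φ' π
      - (lamn - lam) * ∫ x in (0:ℝ)..π, ψ lam x * φ x := by
    intro lam
    have := green lam
    rw [hψπ, hψxπ] at this
    rw [hχ lam, hφ0, hφ'0] at *
    linarith [this]
  -- ψx lamn π = kn * φ' π by uniqueness of derivatives
  have hψxkn : ψx lamn π = kn * φ' π := by
    have hud : UniqueDiffWithinAt ℝ (Set.Icc (0:ℝ) π) π := uniqueDiffOn_Icc pi_pos π hπIcc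
    have h1 : HasDerivWithinAt (ψ lamn) (ψx lamn π) (Set.Icc 0 π) π :=
      ((hψ lamn).2.1 π hπIcc).hasDerivWithinAt
    have h2 : HasDerivWithinAt (ψ lamn) (kn * φ' π) (Set.Icc 0 π) π := by
      have : HasDerivWithinAt (fun y => kn * φ y) (kn * φ' π) (Set.Icc 0 π) π :=
        ((hφ.2.1 π hπIcc).const_mul kn).hasDerivWithinAt
      exact this.congr hk (hk π hπIcc)
    exact hud.eq_deriv _ h1 h2
  -- key scalar identity
  have hknρ : kn * (φ' π + H * φ π) = ρ := by
    have e1 : kn * φ π = -lamn + H₁ := by rw [← hk π hπIcc, hψπ]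
    have e2 : kn * φ' π = lamn * H - H₂ := by rw [← hψxkn, hψxπ]
    rw [hρ]; linear_combination e2 + H * e1
  -- value of the integral at lamn
  have hIn : (∫ x in (0:ℝ)..π, ψ lamn x * φ x) = kn * ∫ x in (0:ℝ)..π, (φ x) ^ 2 := by
    rw [← intervalIntegral.integral_const_mul]
    apply intervalIntegral.integral_congr
    intro x hx
    rw [huIcc] at hx
    simp only
    rw [hk x hx]; ring
  -- the limit function
  set G : ℝ → ℝ := fun lam => H * φ π + φ' π + ∫ x in (0:ℝ)..π, ψ lam x * φ x with hG
  have hGval : G lamn = kn * γn := by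
    have hφHn : φ' π + H * φ π = ρ / kn := by
      field_simp
      linarith [hknρ]
    simp only [hG, hγn, hIn, hφHn]
    field_simp
    linear_combination hknρ
  have hGcont : ContinuousAt G lamn := by
    exact continuousAt_const.add hcont
  rw [hasDerivAt_iff_tendsto_slope]
  have htend : Filter.Tendsto G (nhdsWithin lamn {lamn}ᶜ) (nhds (kn * γn)) := by
    rw [← hGval]
    exact hGcont.continuousWithinAt.tendsto
  refine htend.congr' ?_
  refine Filter.eventuallyEq_of_mem self_mem_nhdsWithin (fun lam hlam => ?_)
  have hne : lam - lamn ≠ 0 := sub_ne_zero.2 hlam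
  have e1 := χform lam
  have e2 := χform lamn
  have e2' : χ lamn = (lamn * H - H₂) * φ π - (-lamn + H₁) * φ' π := by
    rw [e2]; ring
  rw [slope_def_field, e1, e2']
  rw [eq_comm, div_eq_iff hne]
  simp only [hG]
  ring
end

section
/- Let a < b be real numbers, let A : [a,b]×[a,b]×ℝ → ℝ and f : [a,b]×ℝ → ℝ be continuous, and let α₀ ∈ ℝ. Assume that the only continuous function z : [a,b] → ℝ satisfying z(t) + ∫ₐᵇ A(t,τ,α₀)·z(τ) dτ = 0 for all t ∈ [a,b] is z ≡ 0. Then there exist ε > 0 and a function y : [a,b]×(α₀−ε, α₀+ε) → ℝ, continuous in (t,α), such that for every α with |α − α₀| < ε, the function t ↦ y(t,α) is the unique continuous solution of the integral equation y(t,α) + ∫ₐᵇ A(t,τ,α)·y(τ,α) dτ = f(t,α) for all t ∈ [a,b]. -/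
open Real MeasureTheory Set intervalIntegral

set_option maxHeartbeats 1000000
set_option synthInstance.maxHeartbeats 200000

open Filter Topology Set Metric

variable {E : Type*} [NormedAddCommGroup E] [NormedSpace ℝ E] [CompleteSpace E]

theorem riesz_bounded_below (K : E →L[ℝ] E) (hK : IsCompactOperator (⇑K))
    (hinj : Function.Injective (⇑(1 + K))) :
    ∃ c : ℝ, 0 < c ∧ ∀ x : E, c * ‖x‖ ≤ ‖x + K x‖ := by
  by_contra h
  push_neg at h
  have hu : ∀ n : ℕ, ∃ u : E, ‖u‖ = 1 ∧ ‖u + K u‖ < 1 / (n + 1) := by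
    intro n
    obtain ⟨x, hx⟩ := h (1 / (n + 1)) (by positivity)
    have hx0 : x ≠ 0 := by
      rintro rfl
      simp only [map_zero, add_zero, norm_zero, mul_zero] at hx
      exact absurd hx (lt_irrefl 0)
    refine ⟨‖x‖⁻¹ • x, ?_, ?_⟩
    · simp [norm_smul, inv_mul_cancel₀ (norm_ne_zero_iff.2 hx0)]
    · have heq : ‖x‖⁻¹ • x + K (‖x‖⁻¹ • x) = ‖x‖⁻¹ • (x + K x) := by
        simp [smul_add, _root_.map_smul]
      rw [heq, norm_smul, norm_inv, norm_norm,
        inv_mul_lt_iff₀ (norm_pos_iff.2 hx0)]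
      calc ‖x + K x‖ < 1 / (n + 1) * ‖x‖ := hx
        _ = ‖x‖ * (1 / (n + 1)) := by ring
  choose u hu1 hu2 using hu
  obtain ⟨W, hWc, hWsub⟩ := hK.image_closedBall_subset_compact 1
  have hmem : ∀ n, K (u n) ∈ W := fun n =>
    hWsub ⟨u n, by simp [Metric.mem_closedBall, dist_zero_right, (hu1 n).le], rfl⟩
  obtain ⟨y, -, φ, hφ, hy⟩ := hWc.tendsto_subseq hmem
  have htend0 : Tendsto (fun n => u (φ n) + K (u (φ n))) atTop (𝓝 0) := by
    rw [tendsto_iff_norm_sub_tendsto_zero]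
    simp only [sub_zero]
    have h1 : Tendsto (fun n : ℕ => 1 / ((φ n : ℝ) + 1)) atTop (𝓝 0) :=
      tendsto_one_div_add_atTop_nhds_zero_nat.comp hφ.tendsto_atTop
    exact squeeze_zero (fun n => norm_nonneg _) (fun n => (hu2 (φ n)).le) h1
  have hUtend : Tendsto (fun n => u (φ n)) atTop (𝓝 (-y)) := by
    have heq : (fun n => u (φ n)) = fun n => (u (φ n) + K (u (φ n))) - K (u (φ n)) := by
      ext n; abel
    rw [heq]
    simpa using htend0.sub hy
  have hynorm : ‖-y‖ = 1 := by
    have h2 : Tendsto (fun n => ‖u (φ n)‖) atTop (𝓝 ‖-y‖) :=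
      ((continuous_norm).tendsto _).comp hUtend
    have h3 : Tendsto (fun n : ℕ => ‖u (φ n)‖) atTop (𝓝 1) := by
      simpa [hu1] using (tendsto_const_nhds : Tendsto (fun _ : ℕ => (1:ℝ)) atTop (𝓝 1))
    exact tendsto_nhds_unique h2 h3
  have hky : (-y) + K (-y) = 0 := by
    have hc : Tendsto (fun n => u (φ n) + K (u (φ n))) atTop (𝓝 ((-y) + K (-y))) :=
      hUtend.add ((K.continuous.tendsto _).comp hUtend)
    exact tendsto_nhds_unique hc htend0
  have hz : (-y) = 0 := by
    apply hinj (a₂ := 0)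
    simp only [ContinuousLinearMap.add_apply, ContinuousLinearMap.one_apply, map_zero, add_zero]
    exact hky
  rw [hz] at hynorm
  simp at hynorm


theorem riesz_surjective (K : E →L[ℝ] E) (hK : IsCompactOperator (⇑K))
    (hinj : Function.Injective (⇑(1 + K))) :
    Function.Surjective (⇑(1 + K)) := by
  set T : E →L[ℝ] E := 1 + K with hT
  obtain ⟨c, hc, hbdd⟩ := riesz_bounded_below K hK hinj
  have hTx : ∀ x, T x = x + K x := fun x => rfl
  have himage : ∀ M : Submodule ℝ E, IsClosed (M : Set E) → IsClosed (T '' M) := by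
    intro M hM
    have : CompleteSpace M := hM.completeSpace_coe
    have hanti : AntilipschitzWith (⟨c, hc.le⟩ : NNReal)⁻¹ (T.comp M.subtypeL) := by
      apply ContinuousLinearMap.antilipschitz_of_bound
      intro x
      have h1 : c * ‖(x : E)‖ ≤ ‖T (x : E)‖ := by rw [hTx]; exact hbdd _
      have h2 : ‖(x : E)‖ ≤ c⁻¹ * ‖T (x : E)‖ := by
        rw [inv_mul_eq_div, le_div_iff₀ hc, mul_comm]; exact h1
      have h3 : (((⟨c, hc.le⟩ : NNReal)⁻¹ : NNReal) : ℝ) = c⁻¹ := NNReal.coe_inv _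
      show ‖(x : E)‖ ≤ _ * ‖T (x : E)‖
      rw [h3]; exact h2
    have hcl := hanti.isClosed_range (T.comp M.subtypeL).uniformContinuous
    have hrange : Set.range (T.comp M.subtypeL) = T '' M := by
      rw [ContinuousLinearMap.coe_comp', Set.range_comp]
      congr 1
      simp [Submodule.coe_subtypeL', Subtype.range_coe]
    rwa [hrange] at hcl
  by_contra hsurj
  rw [Function.Surjective] at hsurj
  push_neg at hsurj
  obtain ⟨v, hv⟩ := hsurj
  set V : ℕ → Submodule ℝ E := fun n => LinearMap.range ((T ^ n : E →L[ℝ] E) : E →ₗ[ℝ] E) with hV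
  have hVmem : ∀ n x, x ∈ V n ↔ ∃ w, (T ^ n) w = x := by
    intro n x; simp only [hV, LinearMap.mem_range]; rfl
  have hVsucc : ∀ n, (V (n + 1) : Set E) = T '' (V n) := by
    intro n
    ext x
    simp only [SetLike.mem_coe, hVmem, Set.mem_image]
    constructor
    · rintro ⟨w, rfl⟩
      exact ⟨(T ^ n) w, ⟨⟨w, rfl⟩, by rw [← ContinuousLinearMap.mul_apply, ← pow_succ']⟩⟩
    · rintro ⟨u, ⟨⟨w, rfl⟩, rfl⟩⟩
      exact ⟨w, by rw [← ContinuousLinearMap.mul_apply, ← pow_succ']⟩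
  have hTn_inj : ∀ n, Function.Injective (⇑(T ^ n)) := by
    intro n
    induction n with
    | zero => simp [Function.Injective]
    | succ n ih =>
      intro x y hxy
      rw [pow_succ] at hxy
      simp only [ContinuousLinearMap.mul_apply] at hxy
      exact hinj (ih hxy)
  have hVclosed : ∀ n, IsClosed (V n : Set E) := by
    intro n
    induction n with
    | zero =>
      have h0 : V 0 = ⊤ := by
        rw [hV]; simp [pow_zero]
        exact LinearMap.range_eq_top.2 (fun x => ⟨x, rfl⟩)
      rw [h0]; simp
    | succ n ih =>
      rw [hVsucc n]
      exact himage (V n) ih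
  have hchain : ∀ n, V (n + 1) ≤ V n := by
    intro n x hx
    rw [hVmem] at hx ⊢
    obtain ⟨w, rfl⟩ := hx
    exact ⟨T w, by rw [← ContinuousLinearMap.mul_apply, ← pow_succ]⟩
  have hchain' : ∀ m n, m ≤ n → V n ≤ V m := by
    intro m n h
    induction h with
    | refl => exact le_rfl
    | step h ih => exact le_trans (hchain _) ih
  have hstrict : ∀ n, (T ^ n) v ∈ V n ∧ (T ^ n) v ∉ V (n + 1) := by
    intro n
    refine ⟨(hVmem n _).2 ⟨v, rfl⟩, ?_⟩
    intro hmem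
    rw [hVmem] at hmem
    obtain ⟨w, hw⟩ := hmem
    rw [pow_succ] at hw
    simp only [ContinuousLinearMap.mul_apply] at hw
    exact hv w (hTn_inj n hw)
  have hseq : ∀ n : ℕ, ∃ x : E, x ∈ V n ∧ ‖x‖ = 1 ∧ ∀ w ∈ V (n + 1), (1:ℝ)/2 ≤ ‖x - w‖ := by
    intro n
    set F : Submodule ℝ (V n) := Submodule.comap (V n).subtype (V (n + 1)) with hF
    have hFclosed : IsClosed (F : Set (V n)) :=
      (hVclosed (n + 1)).preimage continuous_subtype_val
    have hFproper : ∃ x : V n, x ∉ F := by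
      refine ⟨⟨(T ^ n) v, (hstrict n).1⟩, ?_⟩
      intro hmem
      exact (hstrict n).2 hmem
    obtain ⟨x₀, hx₀F, hx₀⟩ := riesz_lemma hFclosed hFproper (r := 1/2) (by norm_num)
    have hx₀0 : x₀ ≠ 0 := by
      rintro rfl
      exact hx₀F F.zero_mem
    have hn0 : ‖x₀‖ ≠ 0 := norm_ne_zero_iff.2 hx₀0
    have hpos : (0:ℝ) < ‖x₀‖ := lt_of_le_of_ne (norm_nonneg _) (Ne.symm hn0)
    refine ⟨‖x₀‖⁻¹ • (x₀ : E), Submodule.smul_mem _ _ x₀.2, ?_, ?_⟩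
    · have hcoe : ‖(x₀ : E)‖ = ‖x₀‖ := rfl
      rw [norm_smul, norm_inv, norm_norm, hcoe, inv_mul_cancel₀ hn0]
    · intro w hw
      have hwV : w ∈ V n := hchain n hw
      have hy : (‖x₀‖ • (⟨w, hwV⟩ : V n)) ∈ F := Submodule.smul_mem _ _ hw
      have hle := hx₀ _ hy
      have hnorm_eq : ‖x₀ - ‖x₀‖ • (⟨w, hwV⟩ : V n)‖ = ‖(x₀ : E) - ‖x₀‖ • w‖ := rfl
      rw [hnorm_eq] at hle
      have key : ‖x₀‖⁻¹ • ((x₀ : E) - ‖x₀‖ • w) = ‖x₀‖⁻¹ • (x₀ : E) - w := by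
        rw [smul_sub, smul_smul, inv_mul_cancel₀ hn0, one_smul]
      rw [← key, norm_smul, Real.norm_eq_abs, abs_of_nonneg (inv_nonneg.2 (norm_nonneg _))]
      rw [inv_mul_eq_div, le_div_iff₀ hpos]
      linarith
  choose x hxV hxnorm hxdist using hseq
  obtain ⟨W, hWc, hWsub⟩ := hK.image_closedBall_subset_compact 1
  have hmem : ∀ n, K (x n) ∈ W := fun n =>
    hWsub ⟨x n, by simp [Metric.mem_closedBall, dist_zero_right, (hxnorm n).le], rfl⟩
  obtain ⟨y, -, φ, hφ, hy⟩ := hWc.tendsto_subseq hmem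
  have hcauchy := hy.cauchySeq
  rw [Metric.cauchySeq_iff] at hcauchy
  obtain ⟨N, hN⟩ := hcauchy (1/2) (by norm_num)
  have hlt := hN N (le_refl N) (N + 1) (by omega)
  simp only [Function.comp_apply] at hlt
  have hge : (1:ℝ)/2 ≤ dist (K (x (φ N))) (K (x (φ (N+1)))) := by
    rw [dist_eq_norm]
    have h1 : K (x (φ N)) - K (x (φ (N+1))) =
        -(x (φ N) - (T (x (φ N)) - T (x (φ (N+1))) + x (φ (N+1)))) := by
      simp only [hTx]; abel
    rw [h1, norm_neg]
    apply hxdist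
    have h2 : T (x (φ N)) ∈ V (φ N + 1) := by
      rw [← SetLike.mem_coe, hVsucc]
      exact ⟨x (φ N), hxV _, rfl⟩
    have hle : φ N + 1 ≤ φ (N + 1) := hφ (by omega)
    have h3 : T (x (φ (N+1))) ∈ V (φ (N+1) + 1) := by
      rw [← SetLike.mem_coe, hVsucc]
      exact ⟨x (φ (N+1)), hxV _, rfl⟩
    have h4 : T (x (φ (N+1))) ∈ V (φ N + 1) :=
      hchain' _ _ (le_trans hle (by omega)) h3
    have h5 : x (φ (N+1)) ∈ V (φ N + 1) := hchain' _ _ hle (hxV _)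
    exact Submodule.add_mem _ (Submodule.sub_mem _ h2 h4) h5
  linarith

theorem riesz_isUnit (K : E →L[ℝ] E) (hK : IsCompactOperator (⇑K))
    (hinj : Function.Injective (⇑(1 + K))) :
    IsUnit (1 + K : E →L[ℝ] E) :=
  ContinuousLinearMap.isUnit_iff_bijective.2 ⟨hinj, riesz_surjective K hK hinj⟩

open Real MeasureTheory Set intervalIntegral Filter Topology BoundedContinuousFunction

variable (a b : ℝ)

noncomputable def opFun (hab : a < b) (k : C(Icc a b × Icc a b, ℝ)) (z : C(Icc a b, ℝ)) :
    C(Icc a b, ℝ) :=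
  ⟨fun t => ∫ τ in a..b, k (t, projIcc a b hab.le τ) * z (projIcc a b hab.le τ), by
    apply intervalIntegral.continuous_parametric_intervalIntegral_of_continuous'
      (f := fun (t : Icc a b) (τ : ℝ) => k (t, projIcc a b hab.le τ) * z (projIcc a b hab.le τ))
    apply Continuous.mul
    · exact k.continuous.comp (continuous_fst.prodMk ((continuous_projIcc).comp continuous_snd))
    · exact z.continuous.comp ((continuous_projIcc).comp continuous_snd)⟩

theorem opFun_apply (hab : a < b) (k : C(Icc a b × Icc a b, ℝ)) (z : C(Icc a b, ℝ))
    (t : Icc a b) :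
    opFun a b hab k z t = ∫ τ in a..b, k (t, projIcc a b hab.le τ) * z (projIcc a b hab.le τ) :=
  rfl

theorem opFun_integrable (hab : a < b) (k : C(Icc a b × Icc a b, ℝ)) (z : C(Icc a b, ℝ))
    (t : Icc a b) :
    IntervalIntegrable (fun τ => k (t, projIcc a b hab.le τ) * z (projIcc a b hab.le τ))
      MeasureTheory.volume a b := by
  apply Continuous.intervalIntegrable
  apply Continuous.mul
  · exact k.continuous.comp ((continuous_const).prodMk (continuous_projIcc))
  · exact z.continuous.comp (continuous_projIcc)

theorem opFun_norm (hab : a < b) (k : C(Icc a b × Icc a b, ℝ)) (z : C(Icc a b, ℝ)) :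
    ‖opFun a b hab k z‖ ≤ (b - a) * ‖k‖ * ‖z‖ := by
  have hba : (0:ℝ) ≤ b - a := by linarith
  rw [ContinuousMap.norm_le _ (by positivity)]
  intro t
  rw [opFun_apply]
  have hb : ∀ τ ∈ Set.uIoc a b,
      ‖k (t, projIcc a b hab.le τ) * z (projIcc a b hab.le τ)‖ ≤ ‖k‖ * ‖z‖ := by
    intro τ _
    rw [norm_mul]
    exact mul_le_mul (k.norm_coe_le_norm _) (z.norm_coe_le_norm _) (norm_nonneg _)
      (norm_nonneg _)
  calc ‖∫ τ in a..b, k (t, projIcc a b hab.le τ) * z (projIcc a b hab.le τ)‖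
      ≤ ‖k‖ * ‖z‖ * |b - a| := intervalIntegral.norm_integral_le_of_norm_le_const hb
    _ = (b - a) * ‖k‖ * ‖z‖ := by rw [abs_of_nonneg hba]; ring

noncomputable def opL (hab : a < b) :
    C(Icc a b × Icc a b, ℝ) →L[ℝ] C(Icc a b, ℝ) →L[ℝ] C(Icc a b, ℝ) :=
  LinearMap.mkContinuous₂
    (LinearMap.mk₂ ℝ (opFun a b hab)
      (by
        intro k k' z
        ext t
        simp only [opFun_apply, ContinuousMap.add_apply]
        rw [← intervalIntegral.integral_add (opFun_integrable a b hab k z t)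
          (opFun_integrable a b hab k' z t)]
        congr 1; ext τ; simp [add_mul])
      (by
        intro c k z
        ext t
        simp only [opFun_apply, ContinuousMap.coe_smul, Pi.smul_apply, smul_eq_mul]
        simp_rw [mul_assoc]
        rw [intervalIntegral.integral_const_mul])
      (by
        intro k z z'
        ext t
        simp only [opFun_apply, ContinuousMap.add_apply]
        rw [← intervalIntegral.integral_add (opFun_integrable a b hab k z t)
          (opFun_integrable a b hab k z' t)]
        congr 1; ext τ; simp [mul_add])
      (by
        intro c k z
        ext t
        simp only [opFun_apply, ContinuousMap.coe_smul, Pi.smul_apply, smul_eq_mul]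
        simp_rw [show ∀ τ, k (t, projIcc a b hab.le τ) * (c * z (projIcc a b hab.le τ))
            = c * (k (t, projIcc a b hab.le τ) * z (projIcc a b hab.le τ)) from fun τ => by ring]
        rw [intervalIntegral.integral_const_mul]))
    (b - a) (fun k z => by simpa using opFun_norm a b hab k z)

theorem opL_apply (hab : a < b) (k : C(Icc a b × Icc a b, ℝ)) (z : C(Icc a b, ℝ))
    (t : Icc a b) :
    opL a b hab k z t = ∫ τ in a..b, k (t, projIcc a b hab.le τ) * z (projIcc a b hab.le τ) :=
  rfl

theorem opL_isCompact (hab : a < b) (k : C(Icc a b × Icc a b, ℝ)) :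
    IsCompactOperator (⇑(opL a b hab k)) := by
  have hba : (0:ℝ) < b - a := by linarith
  set T := opL a b hab k with hTdef
  set ι := ContinuousMap.linearIsometryBoundedOfCompact (Icc a b) ℝ ℝ with hι
  set S : Set (Icc a b →ᵇ ℝ) := ⇑ι '' (⇑T '' Metric.closedBall 0 1) with hS
  set R : ℝ := (b - a) * ‖k‖ with hR
  have hRnn : (0:ℝ) ≤ R := by positivity
  have hdiff : ∀ (z : C(Icc a b, ℝ)) (x x' : Icc a b), T z x - T z x' =
      ∫ τ in a..b, (k (x, projIcc a b hab.le τ) - k (x', projIcc a b hab.le τ)) *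
        z (projIcc a b hab.le τ) := by
    intro z x x'
    rw [opL_apply, opL_apply, ← intervalIntegral.integral_sub
      (opFun_integrable a b hab k z x) (opFun_integrable a b hab k z x')]
    congr 1; ext τ; ring
  have hcomp : IsCompact (closure S) := by
    apply BoundedContinuousFunction.arzela_ascoli (Icc (-R) R) isCompact_Icc
    · rintro g x ⟨u, ⟨z, hz, rfl⟩, rfl⟩
      rw [ContinuousMap.linearIsometryBoundedOfCompact_apply_apply]
      rw [Metric.mem_closedBall, dist_zero_right] at hz
      have h1 : |T z x| ≤ ‖T z‖ := (T z).norm_coe_le_norm x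
      have h2 : ‖T z‖ ≤ R := by
        calc ‖T z‖ ≤ (b - a) * ‖k‖ * ‖z‖ := opFun_norm a b hab k z
          _ ≤ (b - a) * ‖k‖ * 1 := by
            apply mul_le_mul_of_nonneg_left hz (by positivity)
          _ = R := by rw [hR]; ring
      rw [Set.mem_Icc]
      constructor
      · linarith [neg_abs_le (T z x)]
      · linarith [le_abs_self (T z x)]
    · intro x₀
      rw [Metric.equicontinuousAt_iff]
      intro ε hε
      set ε' : ℝ := ε / (2 * (b - a)) with hε'def
      have hε' : 0 < ε' := by positivity
      obtain ⟨δ, hδ, hδ'⟩ := Metric.uniformContinuous_iff.1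
        (CompactSpace.uniformContinuous_of_continuous k.continuous) ε' hε'
      refine ⟨δ, hδ, ?_⟩
      intro x hx
      rintro ⟨g, u, ⟨z, hz, rfl⟩, rfl⟩
      rw [Metric.mem_closedBall, dist_zero_right] at hz
      have hgx : ∀ (x' : Icc a b), (ι (T z)) x' = T z x' := fun x' =>
        ContinuousMap.linearIsometryBoundedOfCompact_apply_apply (T z) x'
      rw [Real.dist_eq, hgx, hgx, hdiff z x₀ x]
      have hb : ∀ τ ∈ Set.uIoc a b,
          ‖(k (x₀, projIcc a b hab.le τ) - k (x, projIcc a b hab.le τ)) *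
            z (projIcc a b hab.le τ)‖ ≤ ε' * 1 := by
        intro τ _
        rw [norm_mul]
        apply mul_le_mul _ ((z.norm_coe_le_norm _).trans hz) (norm_nonneg _) hε'.le
        rw [Real.norm_eq_abs, ← Real.dist_eq]
        apply le_of_lt
        apply hδ'
        rw [Prod.dist_eq]
        simp only [dist_self]
        rw [max_eq_left dist_nonneg]
        rwa [dist_comm]
      calc |∫ τ in a..b, (k (x₀, projIcc a b hab.le τ) - k (x, projIcc a b hab.le τ)) *
            z (projIcc a b hab.le τ)|
          ≤ ε' * 1 * |b - a| := intervalIntegral.norm_integral_le_of_norm_le_const hb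
        _ = ε / 2 := by
            rw [abs_of_nonneg hba.le, hε'def]; field_simp
        _ < ε := by linarith
  refine ⟨⇑ι.symm '' closure S, hcomp.image ι.symm.continuous, ?_⟩
  apply Filter.mem_of_superset (Metric.closedBall_mem_nhds (0 : C(Icc a b, ℝ)) one_pos)
  intro z hz
  refine ⟨ι (T z), subset_closure ⟨T z, ⟨z, hz, rfl⟩, rfl⟩, ?_⟩
  simp


open Metric in
theorem stmt_8
    (a b : ℝ) (hab : a < b)
    (A : ℝ → ℝ → ℝ → ℝ) (f : ℝ → ℝ → ℝ) (α₀ : ℝ)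
    (hA : ContinuousOn (fun p : ℝ × ℝ × ℝ => A p.1 p.2.1 p.2.2)
      (Set.Icc a b ×ˢ Set.Icc a b ×ˢ (Set.univ : Set ℝ)))
    (hf : ContinuousOn (fun p : ℝ × ℝ => f p.1 p.2)
      (Set.Icc a b ×ˢ (Set.univ : Set ℝ)))
    (huniq : ∀ z : ℝ → ℝ, ContinuousOn z (Set.Icc a b) →
      (∀ t ∈ Set.Icc a b, z t + ∫ τ in a..b, A t τ α₀ * z τ = 0) →
      ∀ t ∈ Set.Icc a b, z t = 0) :
    ∃ ε > 0, ∃ y : ℝ → ℝ → ℝ,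
      ContinuousOn (fun p : ℝ × ℝ => y p.1 p.2)
        (Set.Icc a b ×ˢ Set.Ioo (α₀ - ε) (α₀ + ε)) ∧
      ∀ α : ℝ, |α - α₀| < ε →
        (∀ t ∈ Set.Icc a b, y t α + (∫ τ in a..b, A t τ α * y τ α) = f t α) ∧
        ∀ z : ℝ → ℝ, ContinuousOn z (Set.Icc a b) →
          (∀ t ∈ Set.Icc a b, z t + (∫ τ in a..b, A t τ α * z τ) = f t α) →
          ∀ t ∈ Set.Icc a b, z t = y t α := by
  classical
  set X := Icc a b
  -- kernel and rhs as continuous maps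
  set Kc : C(ℝ × (X × X), ℝ) :=
    ⟨fun p => A (p.2.1 : ℝ) (p.2.2 : ℝ) p.1, by
      have h := hA.comp_continuous
        (f := fun p : ℝ × (X × X) => ((p.2.1 : ℝ), (p.2.2 : ℝ), p.1))
        ((continuous_subtype_val.comp (continuous_fst.comp continuous_snd)).prodMk
          ((continuous_subtype_val.comp (continuous_snd.comp continuous_snd)).prodMk
            continuous_fst))
        (fun p => ⟨p.2.1.2, p.2.2.2, trivial⟩)
      exact h⟩ with hKc
  set Fc : C(ℝ × X, ℝ) :=
    ⟨fun p => f (p.2 : ℝ) p.1, by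
      have h := hf.comp_continuous
        (f := fun p : ℝ × X => ((p.2 : ℝ), p.1))
        ((continuous_subtype_val.comp continuous_snd).prodMk continuous_fst)
        (fun p => ⟨p.2.2, trivial⟩)
      exact h⟩ with hFc
  set Gm : ℝ → (C(X, ℝ) →L[ℝ] C(X, ℝ)) := fun α => 1 + opL a b hab (Kc.curry α) with hGm
  have hGmcont : Continuous Gm :=
    continuous_const.add ((opL a b hab).continuous.comp Kc.curry.continuous)
  have hproco : ∀ (τ : ℝ), τ ∈ Set.uIcc a b → ((projIcc a b hab.le τ : X) : ℝ) = τ := by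
    intro τ hτ
    rw [Set.uIcc_of_le hab.le] at hτ
    rw [projIcc_of_mem hab.le hτ]
  -- evaluation of the operator
  have hTapply : ∀ (α : ℝ) (z : C(X, ℝ)) (t : X),
      (opL a b hab (Kc.curry α) z) t =
        ∫ τ in a..b, A (t : ℝ) τ α * z (projIcc a b hab.le τ) := by
    intro α z t
    rw [opL_apply]
    apply intervalIntegral.integral_congr
    intro τ hτ
    have h1 : Kc.curry α (t, projIcc a b hab.le τ) =
        A (t : ℝ) ((projIcc a b hab.le τ : X) : ℝ) α := rfl
    show Kc.curry α (t, projIcc a b hab.le τ) * z (projIcc a b hab.le τ) =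
      A (t : ℝ) τ α * z (projIcc a b hab.le τ)
    rw [h1, hproco τ hτ]
  -- evaluation of Gm
  have hGapply : ∀ (α : ℝ) (z : C(X, ℝ)) (t : X),
      (Gm α z) t = z t + ∫ τ in a..b, A (t : ℝ) τ α * z (projIcc a b hab.le τ) := by
    intro α z t
    rw [hGm]
    simp only [ContinuousLinearMap.add_apply, ContinuousLinearMap.one_apply,
      ContinuousMap.add_apply]
    rw [hTapply]
  -- injectivity at α₀
  have hinj0 : Function.Injective (⇑(Gm α₀)) := by
    have hker : ∀ x : C(X, ℝ), Gm α₀ x = 0 → x = 0 := by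
      intro x hx
      have hzc : ContinuousOn (fun t : ℝ => x (projIcc a b hab.le t)) (Icc a b) :=
        (x.continuous.comp continuous_projIcc).continuousOn
      have heq : ∀ t ∈ Icc a b,
          (fun t : ℝ => x (projIcc a b hab.le t)) t +
            ∫ τ in a..b, A t τ α₀ * (fun t : ℝ => x (projIcc a b hab.le t)) τ = 0 := by
        intro t ht
        have hxt : (Gm α₀ x) ⟨t, ht⟩ = (0 : C(X,ℝ)) ⟨t, ht⟩ := by rw [hx]
        rw [hGapply] at hxt
        have hco : (projIcc a b hab.le t) = (⟨t, ht⟩ : X) := projIcc_of_mem hab.le ht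
        simp only [ContinuousMap.zero_apply] at hxt
        simp only [hco]
        convert hxt using 2
      have hz0 := huniq _ hzc heq
      ext s
      have h1 := hz0 (s : ℝ) s.2
      have hco : (projIcc a b hab.le (s : ℝ)) = s := by
        rw [projIcc_of_mem hab.le s.2]
      simp only [hco] at h1
      simpa using h1
    intro u v huv
    have h1 : Gm α₀ (u - v) = 0 := by rw [map_sub, huv, sub_self]
    have := hker _ h1
    exact sub_eq_zero.1 this
  -- unit at α₀ and openness
  have hU0 : IsUnit (Gm α₀) :=
    riesz_isUnit (opL a b hab (Kc.curry α₀)) (opL_isCompact a b hab _) hinj0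
  have hUopen : IsOpen {α : ℝ | IsUnit (Gm α)} := by
    have h := Units.isOpen (R := C(X, ℝ) →L[ℝ] C(X, ℝ))
    exact h.preimage hGmcont
  obtain ⟨ε, hε, hball⟩ := Metric.isOpen_iff.1 hUopen α₀ hU0
  set sol : ℝ → C(X, ℝ) := fun α => Ring.inverse (Gm α) (Fc.curry α) with hsol
  have hmemball : ∀ α : ℝ, |α - α₀| < ε → α ∈ Metric.ball α₀ ε := by
    intro α hα
    rw [Metric.mem_ball, Real.dist_eq]
    exact hα
  have hGsol : ∀ α ∈ Metric.ball α₀ ε, Gm α (sol α) = Fc.curry α := by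
    intro α hα
    have hu : IsUnit (Gm α) := hball hα
    calc Gm α (sol α) = (Gm α * Ring.inverse (Gm α)) (Fc.curry α) := rfl
      _ = (1 : C(X, ℝ) →L[ℝ] C(X, ℝ)) (Fc.curry α) := by rw [Ring.mul_inverse_cancel _ hu]
      _ = Fc.curry α := rfl
  have hinjα : ∀ α ∈ Metric.ball α₀ ε, Function.Injective (⇑(Gm α)) := by
    intro α hα u v huv
    have hu : IsUnit (Gm α) := hball hα
    have h1 : (Ring.inverse (Gm α) * Gm α) u = (Ring.inverse (Gm α) * Gm α) v := by
      simp only [ContinuousLinearMap.mul_apply, huv]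
    rwa [Ring.inverse_mul_cancel _ hu, ContinuousLinearMap.one_apply,
      ContinuousLinearMap.one_apply] at h1
  -- continuity of sol
  have hsolc : ContinuousOn sol (Metric.ball α₀ ε) := by
    have h1 : ContinuousOn (fun α => Ring.inverse (Gm α)) (Metric.ball α₀ ε) := by
      intro α hα
      apply ContinuousAt.continuousWithinAt
      have hu : IsUnit (Gm α) := hball hα
      have h2 : ContinuousAt Ring.inverse (Gm α) := by
        have := NormedRing.inverse_continuousAt (R := C(X, ℝ) →L[ℝ] C(X, ℝ)) hu.unit
        rwa [hu.unit_spec] at this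
      exact h2.comp hGmcont.continuousAt
    exact isBoundedBilinearMap_apply.continuous.comp_continuousOn
      (h1.prodMk Fc.curry.continuous.continuousOn)
  refine ⟨ε, hε, fun t α => sol α (projIcc a b hab.le t), ?_, ?_⟩
  · -- joint continuity
    have hIoo : Ioo (α₀ - ε) (α₀ + ε) = Metric.ball α₀ ε := (Real.ball_eq_Ioo α₀ ε).symm
    rw [hIoo]
    apply continuous_eval.comp_continuousOn
      (f := fun p : ℝ × ℝ => ((sol p.2 : C(X, ℝ)), projIcc a b hab.le p.1))
    apply ContinuousOn.prodMk
    · exact hsolc.comp continuousOn_snd (fun p hp => hp.2)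
    · exact (continuous_projIcc.comp continuous_fst).continuousOn
  · intro α hα
    have hαb := hmemball α hα
    constructor
    · intro t ht
      have h1 := congrArg (fun w : C(X, ℝ) => w ⟨t, ht⟩) (hGsol α hαb)
      rw [hGapply] at h1
      have hco : (projIcc a b hab.le t) = (⟨t, ht⟩ : X) := projIcc_of_mem hab.le ht
      have h2 : Fc.curry α ⟨t, ht⟩ = f t α := rfl
      rw [h2] at h1
      beta_reduce
      rw [hco]
      exact h1
    · intro z hzc hzeq t ht
      set zc : C(X, ℝ) := ⟨X.restrict z, hzc.restrict⟩ with hzcdef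
      have hGz : Gm α zc = Fc.curry α := by
        ext s
        rw [hGapply]
        have h3 : (∫ τ in a..b, A (s : ℝ) τ α * zc (projIcc a b hab.le τ)) =
            ∫ τ in a..b, A (s : ℝ) τ α * z τ := by
          apply intervalIntegral.integral_congr
          intro τ hτ
          show A (s : ℝ) τ α * zc (projIcc a b hab.le τ) = A (s : ℝ) τ α * z τ
          have hz1 : zc (projIcc a b hab.le τ) = z ((projIcc a b hab.le τ : X) : ℝ) := rfl
          rw [hz1, hproco τ hτ]
        rw [h3]
        have h4 : zc s = z (s : ℝ) := rfl
        have h5 : Fc.curry α s = f (s : ℝ) α := rfl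
        rw [h4, h5]
        exact hzeq (s : ℝ) s.2
      have hzsol : zc = sol α := hinjα α hαb (by rw [hGz, hGsol α hαb])
      have hco : (projIcc a b hab.le t) = (⟨t, ht⟩ : X) := projIcc_of_mem hab.le ht
      beta_reduce
      rw [hco, ← hzsol]
      rfl
end

section
/- Let λ : ℕ → ℝ be injective, let ρ ∈ ℝ with ρ ≠ 0, and let A, B : ℕ → ℝ satisfy Aₙ·Bₘ − Bₙ·Aₘ = ρ·(λₘ − λₙ) for all m ≠ n. Then there exist real constants κ₁, κ₂, κ₃, κ₄ such that Aₙ = κ₁·λₙ + κ₂ and Bₙ = κ₃·λₙ + κ₄ for every n, and κ₁·κ₄ − κ₂·κ₃ = −ρ. -/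
theorem stmt_12
    (lam : ℕ → ℝ) (hlam : Function.Injective lam)
    (ρ : ℝ) (hρ : ρ ≠ 0)
    (A B : ℕ → ℝ)
    (hrel : ∀ m n : ℕ, m ≠ n → A n * B m - B n * A m = ρ * (lam m - lam n)) :
    ∃ κ₁ κ₂ κ₃ κ₄ : ℝ,
      (∀ n : ℕ, A n = κ₁ * lam n + κ₂) ∧
      (∀ n : ℕ, B n = κ₃ * lam n + κ₄) ∧
      κ₁ * κ₄ - κ₂ * κ₃ = -ρ := by
  have hl : lam 1 - lam 0 ≠ 0 := sub_ne_zero.mpr (fun h => by simpa using hlam h)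
  set D : ℝ := ρ * (lam 1 - lam 0) with hDdef
  have hD0 : D ≠ 0 := mul_ne_zero hρ hl
  have hD : A 0 * B 1 - B 0 * A 1 = ρ * (lam 1 - lam 0) := hrel 1 0 (by decide)
  refine ⟨ρ * (A 1 - A 0) / D, ρ * (A 0 * lam 1 - A 1 * lam 0) / D,
          ρ * (B 1 - B 0) / D, ρ * (B 0 * lam 1 - B 1 * lam 0) / D, ?_, ?_, ?_⟩
  · intro n
    have key : D * A n = ρ * ((A 1 - A 0) * lam n + (A 0 * lam 1 - A 1 * lam 0)) := by
      rcases eq_or_ne n 0 with rfl | h0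
      · rw [hDdef]; ring
      rcases eq_or_ne n 1 with rfl | h1
      · rw [hDdef]; ring
      have e0 := hrel 0 n (Ne.symm h0)
      have e1 := hrel 1 n (Ne.symm h1)
      rw [hDdef]
      linear_combination A 0 * e1 - A 1 * e0 - A n * hD
    field_simp
    linear_combination key
  · intro n
    have key : D * B n = ρ * ((B 1 - B 0) * lam n + (B 0 * lam 1 - B 1 * lam 0)) := by
      rcases eq_or_ne n 0 with rfl | h0
      · rw [hDdef]; ring
      rcases eq_or_ne n 1 with rfl | h1
      · rw [hDdef]; ring
      have e0 := hrel 0 n (Ne.symm h0)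
      have e1 := hrel 1 n (Ne.symm h1)
      rw [hDdef]
      linear_combination B 0 * e1 - B 1 * e0 - B n * hD
    field_simp
    linear_combination key
  · field_simp
    rw [hDdef]
    linear_combination (-ρ * (lam 1 - lam 0)) * hD
end

section
/- Let q : ℝ → ℝ be measurable with ∫₀^π q(t)² dt < ∞, let h, h̃, H, H₁, H₂ ∈ ℝ and set ρ := H·H₁ − H₂. Let λ, μ ∈ ℝ with λ ≠ μ, λ ≠ H₁ and μ ≠ H₁, and let a, b ∈ ℝ. Suppose u is a solution of −y'' + q y = λ y on [0,π] with u(0) = 1 + a, u'(0) = h̃ + a·h, and λ·(u'(π) + H·u(π)) = H₁·u'(π) + H₂·u(π), and v is a solution of −y'' + q y = μ y on [0,π] with v(0) = 1 + b, v'(0) = h̃ + b·h, and μ·(v'(π) + H·v(π)) = H₁·v'(π) + H₂·v(π). Then ∫₀^π u(x)·v(x) dx = −ρ·u(π)·v(π)/((H₁ − λ)·(H₁ − μ)) + (h − h̃)·(a − b)/(λ − μ). -/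
open Real MeasureTheory Set intervalIntegral

lemma mul_cont_int (w φ : ℝ → ℝ) (hw : ContinuousOn w (Set.Icc 0 π))
    (hφ : IntegrableOn φ (Set.Ioc 0 π)) :
    IntegrableOn (fun t => w t * φ t) (Set.Ioc 0 π) := by
  obtain ⟨C, hC⟩ := isCompact_Icc.exists_bound_of_continuousOn hw
  refine Integrable.mono' ((hφ.abs).const_mul C)
    (((hw.mono Set.Ioc_subset_Icc_self).aestronglyMeasurable measurableSet_Ioc).mul
      hφ.aestronglyMeasurable) ?_
  refine (ae_restrict_iff' measurableSet_Ioc).2 (ae_of_all _ fun t ht => ?_)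
  have h1 : ‖w t‖ ≤ C := hC t (Set.Ioc_subset_Icc_self ht)
  have h2 : (0:ℝ) ≤ |φ t| := abs_nonneg _
  calc ‖w t * φ t‖ = ‖w t‖ * |φ t| := by rw [norm_mul]; rfl
    _ ≤ C * |φ t| := by
        exact mul_le_mul_of_nonneg_right h1 h2

/-- Integration by parts with one C¹ function and one primitive of an integrable function. -/
lemma myparts (u u' φ : ℝ → ℝ) (hu' : ContinuousOn u' (Set.Icc 0 π))
    (hu : ∀ x ∈ Set.Icc (0:ℝ) π, HasDerivAt u (u' x) x)
    (hφ : IntegrableOn φ (Set.Ioc 0 π)) :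
    (∫ x in (0:ℝ)..π, u' x * ∫ t in (0:ℝ)..x, φ t)
      = u π * (∫ t in (0:ℝ)..π, φ t) - ∫ t in (0:ℝ)..π, u t * φ t := by
  have hpi : (0:ℝ) ≤ π := pi_pos.le
  set S : Set ℝ := Set.Ioc 0 π with hS
  have hSm : MeasurableSet S := measurableSet_Ioc
  have hu'I : IntegrableOn u' (Set.Ioc 0 π) :=
    (hu'.integrableOn_Icc).mono_set Set.Ioc_subset_Icc_self
  have hcu : ContinuousOn u (Set.Icc 0 π) := fun x hx => (hu x hx).continuousAt.continuousWithinAt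
  set T : Set (ℝ × ℝ) := {p | p.2 ≤ p.1} with hT
  have hTm : MeasurableSet T := measurableSet_le measurable_snd measurable_fst
  set F : ℝ × ℝ → ℝ := T.indicator (fun p => u' p.1 * φ p.2) with hF
  have hFint : Integrable F ((volume.restrict S).prod (volume.restrict S)) :=
    (Integrable.mul_prod hu'I hφ).indicator hTm
  have swap := MeasureTheory.integral_integral_swap (μ := volume.restrict S)
    (ν := volume.restrict S) (f := fun x t => F (x, t)) hFint
  -- LHS of swap
  have hL : (∫ x in S, ∫ t in S, F (x, t)) = ∫ x in S, u' x * ∫ t in (0:ℝ)..x, φ t := by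
    refine setIntegral_congr_fun hSm (fun x hx => ?_)
    have e1 : (fun t => F (x, t)) = (Set.Iic x).indicator (fun t => u' x * φ t) := by
      funext t
      simp only [hF, hT, Set.indicator_apply, Set.mem_setOf_eq, Set.mem_Iic]
    rw [e1, setIntegral_indicator measurableSet_Iic]
    have e2 : S ∩ Set.Iic x = Set.Ioc 0 x := by
      rw [hS, Set.Ioc_inter_Iic, min_eq_right hx.2]
    rw [e2, intervalIntegral.integral_of_le hx.1.le, MeasureTheory.integral_const_mul]
  -- RHS of swap
  have hR : (∫ t in S, ∫ x in S, F (x, t)) = ∫ t in S, (u π - u t) * φ t := by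
    refine setIntegral_congr_fun hSm (fun t ht => ?_)
    have e1 : (fun x => F (x, t)) = (Set.Ici t).indicator (fun x => u' x * φ t) := by
      funext x
      simp only [hF, hT, Set.indicator_apply, Set.mem_setOf_eq, Set.mem_Ici]
    rw [e1, setIntegral_indicator measurableSet_Ici]
    have e2 : S ∩ Set.Ici t = Set.Icc t π := by
      ext x
      simp only [hS, Set.mem_inter_iff, Set.mem_Ioc, Set.mem_Ici, Set.mem_Icc]
      exact ⟨fun ⟨⟨_, h2⟩, h3⟩ => ⟨h3, h2⟩, fun ⟨h3, h2⟩ => ⟨⟨lt_of_lt_of_le ht.1 h3, h2⟩, h3⟩⟩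
    have huIcc : Set.uIcc t π = Set.Icc t π := Set.uIcc_of_le ht.2
    have hsub : Set.Icc t π ⊆ Set.Icc 0 π := Set.Icc_subset_Icc ht.1.le le_rfl
    have hftc : (∫ x in t..π, u' x) = u π - u t := by
      refine intervalIntegral.integral_eq_sub_of_hasDerivAt (fun x hx => ?_) ?_
      · exact hu x (hsub (huIcc ▸ hx))
      · exact (hu'.mono (huIcc ▸ hsub)).intervalIntegrable
    rw [e2, MeasureTheory.integral_mul_const, integral_Icc_eq_integral_Ioc,
      ← intervalIntegral.integral_of_le ht.2, hftc]
  have huφ : IntegrableOn (fun t => u t * φ t) S := mul_cont_int u φ hcu hφ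
  have hsplit : (∫ t in S, (u π - u t) * φ t)
      = u π * (∫ t in S, φ t) - ∫ t in S, u t * φ t := by
    have : (fun t => (u π - u t) * φ t) = fun t => u π * φ t - u t * φ t := by
      funext t; ring
    rw [this, MeasureTheory.integral_sub (hφ.const_mul (u π)) huφ,
      MeasureTheory.integral_const_mul]
  rw [intervalIntegral.integral_of_le hpi, intervalIntegral.integral_of_le hpi,
    intervalIntegral.integral_of_le hpi, ← hL, swap, hR, hsplit]

theorem main_test
    (q : ℝ → ℝ) (hq_meas : Measurable q)
    (hq_L2 : IntegrableOn (fun t => (q t) ^ 2) (Set.Icc 0 π))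
    (lam μ : ℝ)
    (u u' : ℝ → ℝ)
    (hu'c : ContinuousOn u' (Set.Icc 0 π))
    (huD : ∀ x ∈ Set.Icc (0:ℝ) π, HasDerivAt u (u' x) x)
    (huI : ∀ x ∈ Set.Icc (0:ℝ) π, u' x = u' 0 + ∫ t in (0:ℝ)..x, (q t - lam) * u t)
    (v v' : ℝ → ℝ)
    (hv'c : ContinuousOn v' (Set.Icc 0 π))
    (hvD : ∀ x ∈ Set.Icc (0:ℝ) π, HasDerivAt v (v' x) x)
    (hvI : ∀ x ∈ Set.Icc (0:ℝ) π, v' x = v' 0 + ∫ t in (0:ℝ)..x, (q t - μ) * v t) :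
    (lam - μ) * (∫ x in (0:ℝ)..π, u x * v x)
      = (u π * v' π - u' π * v π) - (u 0 * v' 0 - u' 0 * v 0) := by
  have hpi : (0:ℝ) ≤ π := pi_pos.le
  have hIcc : Set.uIcc (0:ℝ) π = Set.Icc 0 π := Set.uIcc_of_le hpi
  have hmem : ∀ x ∈ Set.uIcc (0:ℝ) π, x ∈ Set.Icc (0:ℝ) π := fun x hx => hIcc ▸ hx
  have hcu : ContinuousOn u (Set.Icc 0 π) := fun x hx => (huD x hx).continuousAt.continuousWithinAt
  have hcv : ContinuousOn v (Set.Icc 0 π) := fun x hx => (hvD x hx).continuousAt.continuousWithinAt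
  have hconst : IntegrableOn (fun _ : ℝ => (1:ℝ)) (Set.Icc 0 π) :=
    integrableOn_const measure_Icc_lt_top.ne
  have hsum : IntegrableOn (fun t => q t ^ 2 + 1) (Set.Icc 0 π) := hq_L2.add hconst
  have hqi : IntegrableOn q (Set.Icc 0 π) := by
    refine hsum.mono' hq_meas.aestronglyMeasurable (ae_of_all _ fun t => ?_)
    have h1 := sq_nonneg (|q t| - 1)
    have h2 : |q t| ^ 2 = q t ^ 2 := sq_abs (q t)
    simp only [Real.norm_eq_abs]
    nlinarith [abs_nonneg (q t)]
  have hqlam : IntegrableOn (fun t => q t - lam) (Set.Ioc 0 π) :=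
    ((hqi.mono_set Set.Ioc_subset_Icc_self).sub (integrableOn_const measure_Ioc_lt_top.ne))
  have hqmu : IntegrableOn (fun t => q t - μ) (Set.Ioc 0 π) :=
    ((hqi.mono_set Set.Ioc_subset_Icc_self).sub (integrableOn_const measure_Ioc_lt_top.ne))
  have hfi : IntegrableOn (fun t => (q t - lam) * u t) (Set.Ioc 0 π) :=
    (mul_cont_int u (fun t => q t - lam) hcu hqlam).congr (ae_of_all _ fun t => mul_comm _ _)
  have hgi : IntegrableOn (fun t => (q t - μ) * v t) (Set.Ioc 0 π) :=
    (mul_cont_int v (fun t => q t - μ) hcv hqmu).congr (ae_of_all _ fun t => mul_comm _ _)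
  have hGc : ContinuousOn (fun x => ∫ t in (0:ℝ)..x, (q t - μ) * v t) (Set.Icc 0 π) := by
    rw [← hIcc]
    exact intervalIntegral.continuousOn_primitive_interval
      (by rw [hIcc, integrableOn_Icc_iff_integrableOn_Ioc]; exact hgi)
  have hFc : ContinuousOn (fun x => ∫ t in (0:ℝ)..x, (q t - lam) * u t) (Set.Icc 0 π) := by
    rw [← hIcc]
    exact intervalIntegral.continuousOn_primitive_interval
      (by rw [hIcc, integrableOn_Icc_iff_integrableOn_Ioc]; exact hfi)
  have hftcu : (∫ x in (0:ℝ)..π, u' x) = u π - u 0 :=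
    intervalIntegral.integral_eq_sub_of_hasDerivAt (fun x hx => huD x (hmem x hx))
      (ContinuousOn.intervalIntegrable (by rw [hIcc]; exact hu'c))
  have hftcv : (∫ x in (0:ℝ)..π, v' x) = v π - v 0 :=
    intervalIntegral.integral_eq_sub_of_hasDerivAt (fun x hx => hvD x (hmem x hx))
      (ContinuousOn.intervalIntegrable (by rw [hIcc]; exact hv'c))
  have P1 := myparts u u' (fun t => (q t - μ) * v t) hu'c huD hgi
  have P2 := myparts v v' (fun t => (q t - lam) * u t) hv'c hvD hfi
  have hE1 : (∫ x in (0:ℝ)..π, u' x * v' x)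
      = (u π - u 0) * v' 0 + (∫ x in (0:ℝ)..π, u' x * ∫ t in (0:ℝ)..x, (q t - μ) * v t) := by
    have e : ∀ x ∈ Set.uIcc (0:ℝ) π,
        u' x * v' x = u' x * v' 0 + u' x * ∫ t in (0:ℝ)..x, (q t - μ) * v t := by
      intro x hx
      rw [hvI x (hmem x hx)]; ring
    rw [intervalIntegral.integral_congr e, intervalIntegral.integral_add
      (ContinuousOn.intervalIntegrable (by rw [hIcc]; exact hu'c.mul continuousOn_const))
      (ContinuousOn.intervalIntegrable (by rw [hIcc]; exact hu'c.mul hGc)),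
      intervalIntegral.integral_mul_const, hftcu]
  have hE2 : (∫ x in (0:ℝ)..π, u' x * v' x)
      = (v π - v 0) * u' 0 + (∫ x in (0:ℝ)..π, v' x * ∫ t in (0:ℝ)..x, (q t - lam) * u t) := by
    have e : ∀ x ∈ Set.uIcc (0:ℝ) π,
        u' x * v' x = v' x * u' 0 + v' x * ∫ t in (0:ℝ)..x, (q t - lam) * u t := by
      intro x hx
      rw [huI x (hmem x hx)]; ring
    rw [intervalIntegral.integral_congr e, intervalIntegral.integral_add
      (ContinuousOn.intervalIntegrable (by rw [hIcc]; exact hv'c.mul continuousOn_const))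
      (ContinuousOn.intervalIntegrable (by rw [hIcc]; exact hv'c.mul hFc)),
      intervalIntegral.integral_mul_const, hftcv]
  have hFpi : (∫ t in (0:ℝ)..π, (q t - lam) * u t) = u' π - u' 0 := by
    have := huI π ⟨hpi, le_rfl⟩; linarith
  have hGpi : (∫ t in (0:ℝ)..π, (q t - μ) * v t) = v' π - v' 0 := by
    have := hvI π ⟨hpi, le_rfl⟩; linarith
  have hdiff : (∫ t in (0:ℝ)..π, u t * ((q t - μ) * v t))
      - (∫ t in (0:ℝ)..π, v t * ((q t - lam) * u t))
      = (lam - μ) * ∫ x in (0:ℝ)..π, u x * v x := by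
    have hug : IntervalIntegrable (fun t => u t * ((q t - μ) * v t)) volume 0 π := by
      rw [intervalIntegrable_iff_integrableOn_Ioc_of_le hpi]
      exact mul_cont_int u _ hcu hgi
    have hvf : IntervalIntegrable (fun t => v t * ((q t - lam) * u t)) volume 0 π := by
      rw [intervalIntegrable_iff_integrableOn_Ioc_of_le hpi]
      exact mul_cont_int v _ hcv hfi
    rw [← intervalIntegral.integral_sub hug hvf, ← intervalIntegral.integral_const_mul]
    exact intervalIntegral.integral_congr fun t _ => by ring
  have key := hE1.symm.trans hE2
  rw [P1, P2, hFpi, hGpi] at key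
  linarith [hdiff, key]

theorem stmt_14
    (q : ℝ → ℝ) (hq_meas : Measurable q)
    (hq_L2 : IntegrableOn (fun t => (q t) ^ 2) (Set.Icc 0 π))
    (h ht H H₁ H₂ : ℝ) (ρ : ℝ) (hρ : ρ = H * H₁ - H₂)
    (lam μ : ℝ) (hlamμ : lam ≠ μ) (hlamH₁ : lam ≠ H₁) (hμH₁ : μ ≠ H₁)
    (a b : ℝ)
    (u u' : ℝ → ℝ) (hu : IsSol q lam u u')
    (hu0 : u 0 = 1 + a) (hu'0 : u' 0 = ht + a * h)
    (hubc : lam * (u' π + H * u π) = H₁ * u' π + H₂ * u π)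
    (v v' : ℝ → ℝ) (hv : IsSol q μ v v')
    (hv0 : v 0 = 1 + b) (hv'0 : v' 0 = ht + b * h)
    (hvbc : μ * (v' π + H * v π) = H₁ * v' π + H₂ * v π) :
    (∫ x in (0:ℝ)..π, u x * v x) =
      -ρ * u π * v π / ((H₁ - lam) * (H₁ - μ)) + (h - ht) * (a - b) / (lam - μ) := by
  have key := main_test q hq_meas hq_L2 lam μ u u' hu.1 hu.2.1 hu.2.2 v v' hv.1 hv.2.1 hv.2.2
  have hd : lam - μ ≠ 0 := sub_ne_zero.2 hlamμ
  have h1 : lam - H₁ ≠ 0 := sub_ne_zero.2 hlamH₁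
  have h2 : μ - H₁ ≠ 0 := sub_ne_zero.2 hμH₁
  have hupv : u' π = (H₂ - lam * H) * u π / (lam - H₁) := by
    rw [eq_div_iff h1]; linear_combination hubc
  have hvpv : v' π = (H₂ - μ * H) * v π / (μ - H₁) := by
    rw [eq_div_iff h2]; linear_combination hvbc
  rw [hupv, hvpv, hu0, hu'0, hv0, hv'0] at key
  rw [hρ]
  have h1' : H₁ - lam ≠ 0 := sub_ne_zero.2 (Ne.symm hlamH₁)
  have h2' : H₁ - μ ≠ 0 := sub_ne_zero.2 (Ne.symm hμH₁)
  field_simp at key ⊢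
  linear_combination key
end

section
/- Let q : ℝ → ℝ be measurable with ∫₀^π q(t)² dt < ∞, let h, h̃, H, H₁, H₂ ∈ ℝ with h ≠ h̃ and ρ := H·H₁ − H₂ > 0. Suppose φ, ψ : [0,π] × ℝ → ℝ are such that for every λ ∈ ℝ, φ(·,λ) is a solution of −y'' + q y = λ y on [0,π] with φ(0,λ) = 1, ∂ₓφ(0,λ) = h, and ψ(·,λ) is a solution of −y'' + q y = λ y on [0,π] with ψ(0,λ) = 1, ∂ₓψ(0,λ) = h̃. Define Φ(λ) := λ·(∂ₓφ(π,λ) + H·φ(π,λ)) − H₁·∂ₓφ(π,λ) − H₂·φ(π,λ) and Ψ(λ) := λ·(∂ₓψ(π,λ) + H·ψ(π,λ)) − H₁·∂ₓψ(π,λ) − H₂·ψ(π,λ). Let λₙ ∈ ℝ with Φ(λₙ) = 0, Ψ(λₙ) ≠ 0 and λₙ ≠ H₁, and assume the maps λ ↦ ∫₀^π ψ(x,λ)·φ(x,λₙ) dx, λ ↦ ∫₀^π φ(x,λ)·φ(x,λₙ) dx, λ ↦ ψ(π,λ) and λ ↦ φ(π,λ) are continuous at λₙ. Then Φ is differentiable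 at λₙ and Φ'(λₙ) = γₙ·Ψ(λₙ)/(h − h̃), where γₙ := ∫₀^π φ(x,λₙ)² dx + (∂ₓφ(π,λₙ) + H·φ(π,λₙ))²/ρ; equivalently γₙ = (h − h̃)·Φ'(λₙ)/Ψ(λₙ). -/
open Real MeasureTheory Set intervalIntegral

lemma ftcIcc (z z' : ℝ → ℝ) (hz' : ContinuousOn z' (Set.Icc 0 π))
    (hz : ∀ x ∈ Set.Icc (0:ℝ) π, HasDerivAt z (z' x) x) :
    ∫ x in Set.Ioc (0:ℝ) π, z' x = z π - z 0 := by
  rw [← intervalIntegral.integral_of_le Real.pi_pos.le]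
  refine intervalIntegral.integral_eq_sub_of_hasDerivAt (fun x hx => ?_) ?_
  · rw [Set.uIcc_of_le Real.pi_pos.le] at hx; exact hz x hx
  · exact (hz'.mono (by rw [Set.uIcc_of_le Real.pi_pos.le])).intervalIntegrable

lemma sol_int (q : ℝ → ℝ) (hq : IntegrableOn q (Set.Icc 0 π)) (hq_meas : Measurable q) (lam : ℝ)
    (y w : ℝ → ℝ) (hyc : ContinuousOn y (Set.Icc 0 π)) (hwc : ContinuousOn w (Set.Icc 0 π)) :
    IntegrableOn (fun t => (q t - lam) * y t * w t) (Set.Icc 0 π) := by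
  obtain ⟨M, hM⟩ := isCompact_Icc.exists_bound_of_continuousOn hyc
  obtain ⟨N, hN⟩ := isCompact_Icc.exists_bound_of_continuousOn hwc
  have hN0 : 0 ≤ N := le_trans (norm_nonneg _) (hN 0 ⟨le_refl _, pi_pos.le⟩)
  have hM0 : 0 ≤ M := le_trans (norm_nonneg _) (hM 0 ⟨le_refl _, pi_pos.le⟩)
  have hbd : IntegrableOn (fun t => (‖q t‖ + |lam|) * (M * N)) (Set.Icc 0 π) := by
    exact (hq.norm.add (integrableOn_const isCompact_Icc.measure_lt_top.ne)).mul_const _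
  refine Integrable.mono' hbd ?_ ?_
  · exact (((hq_meas.aemeasurable.sub aemeasurable_const).mul
      (hyc.aemeasurable measurableSet_Icc)).mul (hwc.aemeasurable measurableSet_Icc)).aestronglyMeasurable
  · filter_upwards [ae_restrict_mem measurableSet_Icc] with t htI
    have h1 : ‖q t - lam‖ ≤ ‖q t‖ + |lam| := norm_sub_le _ _
    have h2 := hM t htI
    have h3 := hN t htI
    calc ‖(q t - lam) * y t * w t‖ = ‖q t - lam‖ * ‖y t‖ * ‖w t‖ := by
          simp [abs_mul]
      _ ≤ (‖q t‖ + |lam|) * M * N := by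
          apply mul_le_mul (mul_le_mul h1 h2 (norm_nonneg _) (by positivity)) h3 (norm_nonneg _)
          positivity
      _ = (‖q t‖ + |lam|) * (M * N) := by ring

lemma parts_s16 (f z z' : ℝ → ℝ)
    (hfm : AEStronglyMeasurable f (volume.restrict (Set.Ioc 0 π)))
    (hfi : IntegrableOn f (Set.Icc 0 π))
    (hz' : ContinuousOn z' (Set.Icc 0 π))
    (hz : ∀ x ∈ Set.Icc (0:ℝ) π, HasDerivAt z (z' x) x) :
    ∫ s in Set.Ioc (0:ℝ) π, (∫ t in Set.Ioc (0:ℝ) s, f t) * z' s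
      = (∫ t in Set.Ioc (0:ℝ) π, f t) * z π - ∫ t in Set.Ioc (0:ℝ) π, f t * z t := by
  have hπ : (0:ℝ) ≤ π := Real.pi_pos.le
  obtain ⟨C, hC⟩ := isCompact_Icc.exists_bound_of_continuousOn hz'
  have hC0 : 0 ≤ C := le_trans (norm_nonneg _) (hC 0 ⟨le_refl _, hπ⟩)
  have hfi' : IntegrableOn f (Set.Ioc 0 π) := hfi.mono_set Set.Ioc_subset_Icc_self
  have hz'm : AEStronglyMeasurable z' (volume.restrict (Set.Ioc 0 π)) :=
    (hz'.aestronglyMeasurable measurableSet_Icc).mono_measure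
      (Measure.restrict_mono Set.Ioc_subset_Icc_self le_rfl)
  have ftc : ∀ a b : ℝ, 0 ≤ a → a ≤ b → b ≤ π → (∫ x in a..b, z' x) = z b - z a := by
    intro a b ha hab hb
    refine intervalIntegral.integral_eq_sub_of_hasDerivAt (fun x hx => ?_) ?_
    · rw [Set.uIcc_of_le hab] at hx
      exact hz x ⟨ha.trans hx.1, hx.2.trans hb⟩
    · exact (hz'.mono (by rw [Set.uIcc_of_le hab]; exact Set.Icc_subset_Icc ha hb)).intervalIntegrable
  set μ := volume.restrict (Set.Ioc (0:ℝ) π) with hμ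
  have hfin : IsFiniteMeasure μ := by
    constructor
    rw [hμ, Measure.restrict_apply_univ]
    exact (measure_mono Set.Ioc_subset_Icc_self).trans_lt isCompact_Icc.measure_lt_top
  set K : ℝ × ℝ → ℝ := fun p => if p.2 ≤ p.1 then f p.2 * z' p.1 else 0 with hKdef
  have hKm : AEStronglyMeasurable K (μ.prod μ) := by
    have h2 : K = Set.indicator {p : ℝ × ℝ | p.2 ≤ p.1} (fun p => f p.2 * z' p.1) := by
      ext p; by_cases hp : p.2 ≤ p.1 <;> simp [hKdef, hp, Set.indicator]
    rw [h2]
    exact (hfm.comp_snd.mul hz'm.comp_fst).indicator (measurableSet_le measurable_snd measurable_fst)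
  have hKi : Integrable K (μ.prod μ) := by
    refine Integrable.mono' (g := fun p : ℝ × ℝ => C * ‖f p.2‖) ?_ hKm ?_
    · exact (integrable_const C).mul_prod hfi'.norm
    · have hprod : μ.prod μ = (volume.prod volume).restrict
          ((Set.Ioc (0:ℝ) π) ×ˢ (Set.Ioc (0:ℝ) π)) := by
        rw [hμ, Measure.prod_restrict]
      rw [hprod]
      filter_upwards [ae_restrict_mem (measurableSet_Ioc.prod measurableSet_Ioc)] with p hp
      rcases hp with ⟨hp1, hp2⟩
      by_cases hle : p.2 ≤ p.1
      · have : ‖K p‖ = ‖f p.2‖ * ‖z' p.1‖ := by simp [hKdef, hle, abs_mul]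
        rw [this, mul_comm]
        exact mul_le_mul_of_nonneg_right (hC p.1 (Set.Ioc_subset_Icc_self hp1)) (norm_nonneg _)
      · simp [hKdef, hle]; positivity

  -- Step 1: rewrite the inner integral as an integral of K over μ
  have step1 : ∀ s ∈ Set.Ioc (0:ℝ) π,
      (∫ t in Set.Ioc (0:ℝ) s, f t) * z' s = ∫ t, K (s, t) ∂μ := by
    intro s hs
    have h1 : ∫ t in Set.Ioc (0:ℝ) s, f t = ∫ t, (Set.Iic s).indicator f t ∂μ := by
      rw [hμ, setIntegral_indicator measurableSet_Iic, Set.Ioc_inter_Iic,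
        min_eq_right hs.2]
    rw [h1, ← MeasureTheory.integral_mul_const]
    congr 1
    funext t
    by_cases hts : t ≤ s <;> simp [hKdef, hts, Set.indicator_of_mem, Set.mem_Iic]
  -- Step 2: inner integral after swap
  have step2 : ∀ t ∈ Set.Ioc (0:ℝ) π, (∫ s, K (s, t) ∂μ) = f t * (z π - z t) := by
    intro t htI
    have h1 : (fun s => K (s, t)) = fun s => f t * (Set.Ici t).indicator z' s := by
      funext s
      by_cases hts : t ≤ s <;> simp [hKdef, hts, Set.indicator_of_mem, Set.mem_Ici]
    rw [h1, MeasureTheory.integral_const_mul]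
    congr 1
    have h2 : Set.Ioc (0:ℝ) π ∩ Set.Ici t = Set.Icc t π := by
      ext x
      simp only [Set.mem_inter_iff, Set.mem_Ioc, Set.mem_Ici, Set.mem_Icc]
      constructor
      · rintro ⟨⟨_, hx2⟩, hx3⟩; exact ⟨hx3, hx2⟩
      · rintro ⟨hx1, hx2⟩; exact ⟨⟨lt_of_lt_of_le htI.1 hx1, hx2⟩, hx1⟩
    rw [hμ, setIntegral_indicator measurableSet_Ici, h2, integral_Icc_eq_integral_Ioc,
      ← intervalIntegral.integral_of_le htI.2]
    exact ftc t π htI.1.le htI.2 le_rfl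
  -- Fubini
  have key : ∫ s, (∫ t, K (s, t) ∂μ) ∂μ = ∫ t, (∫ s, K (s, t) ∂μ) ∂μ :=
    MeasureTheory.integral_integral_swap hKi
  -- continuity of z on Icc
  have hzc : ContinuousOn z (Set.Icc 0 π) := fun x hx =>
    (hz x hx).continuousAt.continuousWithinAt
  obtain ⟨Mz, hMz⟩ := isCompact_Icc.exists_bound_of_continuousOn hzc
  have hfzi : IntegrableOn (fun t => f t * z t) (Set.Ioc (0:ℝ) π) := by
    refine Integrable.mono' (g := fun t => ‖f t‖ * Mz) (hfi'.norm.mul_const _) ?_ ?_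
    · exact hfm.mul ((hzc.aestronglyMeasurable measurableSet_Icc).mono_measure
        (Measure.restrict_mono Set.Ioc_subset_Icc_self le_rfl))
    · filter_upwards [ae_restrict_mem measurableSet_Ioc] with t htI
      rw [norm_mul]
      exact mul_le_mul_of_nonneg_left (hMz t (Set.Ioc_subset_Icc_self htI)) (norm_nonneg _)
  calc ∫ s in Set.Ioc (0:ℝ) π, (∫ t in Set.Ioc (0:ℝ) s, f t) * z' s
      = ∫ s, (∫ t, K (s, t) ∂μ) ∂μ := setIntegral_congr_fun measurableSet_Ioc step1
    _ = ∫ t, (∫ s, K (s, t) ∂μ) ∂μ := key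
    _ = ∫ t in Set.Ioc (0:ℝ) π, f t * (z π - z t) := setIntegral_congr_fun measurableSet_Ioc step2
    _ = ∫ t in Set.Ioc (0:ℝ) π, (f t * z π - f t * z t) := by
        congr 1; funext t; ring
    _ = (∫ t in Set.Ioc (0:ℝ) π, f t) * z π - ∫ t in Set.Ioc (0:ℝ) π, f t * z t := by
        rw [MeasureTheory.integral_sub (hfi'.mul_const _) hfzi,
          MeasureTheory.integral_mul_const]

lemma wron (q : ℝ → ℝ) (hq_meas : Measurable q) (hq : IntegrableOn q (Set.Icc 0 π))
    (lam mu : ℝ) (y y' z z' : ℝ → ℝ) (hy : IsSol q lam y y') (hz : IsSol q mu z z') :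
    y' π * z π - y π * z' π - (y' 0 * z 0 - y 0 * z' 0)
      = (mu - lam) * ∫ x in (0:ℝ)..π, y x * z x := by
  have hπ : (0:ℝ) ≤ π := Real.pi_pos.le
  have hπI : π ∈ Set.Ioc (0:ℝ) π := ⟨Real.pi_pos, le_rfl⟩
  have hyc : ContinuousOn y (Set.Icc 0 π) := fun x hx => (hy.2.1 x hx).continuousAt.continuousWithinAt
  have hzc : ContinuousOn z (Set.Icc 0 π) := fun x hx => (hz.2.1 x hx).continuousAt.continuousWithinAt
  have measf : ∀ (c : ℝ) (w : ℝ → ℝ), ContinuousOn w (Set.Icc 0 π) →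
      AEStronglyMeasurable (fun t => (q t - c) * w t) (volume.restrict (Set.Ioc 0 π)) := by
    intro c w hwc
    exact (((hq_meas.aemeasurable.sub aemeasurable_const).mono_measure
        (Measure.restrict_mono Set.Ioc_subset_Icc_self le_rfl)).mul
      ((hwc.aemeasurable measurableSet_Icc).mono_measure
        (Measure.restrict_mono Set.Ioc_subset_Icc_self le_rfl))).aestronglyMeasurable
  have inty : IntegrableOn (fun t => (q t - lam) * y t) (Set.Icc 0 π) := by
    have := sol_int q hq hq_meas lam y (fun _ => 1) hyc continuousOn_const
    simpa using this
  have intz : IntegrableOn (fun t => (q t - mu) * z t) (Set.Icc 0 π) := by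
    have := sol_int q hq hq_meas mu z (fun _ => 1) hzc continuousOn_const
    simpa using this
  have indefy : ∀ s ∈ Set.Ioc (0:ℝ) π, ∫ t in Set.Ioc (0:ℝ) s, (q t - lam) * y t = y' s - y' 0 := by
    intro s hs
    rw [← intervalIntegral.integral_of_le hs.1.le, hy.2.2 s ⟨hs.1.le, hs.2⟩]
    ring
  have indefz : ∀ s ∈ Set.Ioc (0:ℝ) π, ∫ t in Set.Ioc (0:ℝ) s, (q t - mu) * z t = z' s - z' 0 := by
    intro s hs
    rw [← intervalIntegral.integral_of_le hs.1.le, hz.2.2 s ⟨hs.1.le, hs.2⟩]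
    ring
  have P1 := parts_s16 (fun t => (q t - lam) * y t) z z' (measf lam y hyc) inty hz.1 hz.2.1
  have P2 := parts_s16 (fun t => (q t - mu) * z t) y y' (measf mu z hzc) intz hy.1 hy.2.1
  rw [setIntegral_congr_fun measurableSet_Ioc
    (fun s hs => by rw [indefy s hs] : Set.EqOn _ (fun s => (y' s - y' 0) * z' s) _),
    indefy π hπI] at P1
  rw [setIntegral_congr_fun measurableSet_Ioc
    (fun s hs => by rw [indefz s hs] : Set.EqOn _ (fun s => (z' s - z' 0) * y' s) _),
    indefz π hπI] at P2
  -- expand the left-hand sides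
  have iy' : IntegrableOn y' (Set.Ioc 0 π) := (hy.1.integrableOn_Icc).mono_set Set.Ioc_subset_Icc_self
  have iz' : IntegrableOn z' (Set.Ioc 0 π) := (hz.1.integrableOn_Icc).mono_set Set.Ioc_subset_Icc_self
  have iyz' : IntegrableOn (fun s => y' s * z' s) (Set.Ioc 0 π) :=
    ((hy.1.mul hz.1).integrableOn_Icc).mono_set Set.Ioc_subset_Icc_self
  have e1 : ∫ s in Set.Ioc (0:ℝ) π, (y' s - y' 0) * z' s
      = (∫ s in Set.Ioc (0:ℝ) π, y' s * z' s) - y' 0 * (z π - z 0) := by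
    have : (fun s => (y' s - y' 0) * z' s) = fun s => y' s * z' s - y' 0 * z' s := by
      funext s; ring
    rw [this, MeasureTheory.integral_sub iyz' (iz'.const_mul _),
      MeasureTheory.integral_const_mul, ftcIcc z z' hz.1 hz.2.1]
  have e2 : ∫ s in Set.Ioc (0:ℝ) π, (z' s - z' 0) * y' s
      = (∫ s in Set.Ioc (0:ℝ) π, y' s * z' s) - z' 0 * (y π - y 0) := by
    have : (fun s => (z' s - z' 0) * y' s) = fun s => y' s * z' s - z' 0 * y' s := by
      funext s; ring
    rw [this, MeasureTheory.integral_sub iyz' (iy'.const_mul _),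
      MeasureTheory.integral_const_mul, ftcIcc y y' hy.1 hy.2.1]
  rw [e1] at P1
  rw [e2] at P2
  -- the difference of the two remaining integrals
  have intyz : IntegrableOn (fun t => (q t - lam) * y t * z t) (Set.Ioc 0 π) :=
    (sol_int q hq hq_meas lam y z hyc hzc).mono_set Set.Ioc_subset_Icc_self
  have intzy : IntegrableOn (fun t => (q t - mu) * z t * y t) (Set.Ioc 0 π) :=
    (sol_int q hq hq_meas mu z y hzc hyc).mono_set Set.Ioc_subset_Icc_self
  have D : (∫ t in Set.Ioc (0:ℝ) π, (q t - lam) * y t * z t)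
        - (∫ t in Set.Ioc (0:ℝ) π, (q t - mu) * z t * y t)
      = (mu - lam) * ∫ x in (0:ℝ)..π, y x * z x := by
    rw [← MeasureTheory.integral_sub intyz intzy]
    rw [intervalIntegral.integral_of_le hπ, ← MeasureTheory.integral_const_mul]
    congr 1; funext t; ring
  linarith [P1, P2, D]

theorem stmt_16
    (q : ℝ → ℝ) (hq_meas : Measurable q)
    (hq_L2 : IntegrableOn (fun t => (q t) ^ 2) (Set.Icc 0 π))
    (h ht H H₁ H₂ : ℝ) (hht : h ≠ ht) (hρ : 0 < H * H₁ - H₂)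
    (φ φx ψ ψx : ℝ → ℝ → ℝ)
    (hφ : ∀ lam : ℝ, IsSol q lam (φ lam) (φx lam))
    (hφ0 : ∀ lam : ℝ, φ lam 0 = 1) (hφx0 : ∀ lam : ℝ, φx lam 0 = h)
    (hψ : ∀ lam : ℝ, IsSol q lam (ψ lam) (ψx lam))
    (hψ0 : ∀ lam : ℝ, ψ lam 0 = 1) (hψx0 : ∀ lam : ℝ, ψx lam 0 = ht)
    (Φ Ψ : ℝ → ℝ)
    (hΦ : ∀ lam : ℝ, Φ lam =
      lam * (φx lam π + H * φ lam π) - H₁ * φx lam π - H₂ * φ lam π)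
    (hΨ : ∀ lam : ℝ, Ψ lam =
      lam * (ψx lam π + H * ψ lam π) - H₁ * ψx lam π - H₂ * ψ lam π)
    (lamn : ℝ) (hΦn : Φ lamn = 0) (hΨn : Ψ lamn ≠ 0) (hH₁n : lamn ≠ H₁)
    (hcont₁ : ContinuousAt (fun lam => ∫ x in (0:ℝ)..π, ψ lam x * φ lamn x) lamn)
    (hcont₂ : ContinuousAt (fun lam => ∫ x in (0:ℝ)..π, φ lam x * φ lamn x) lamn)
    (hcont₃ : ContinuousAt (fun lam => ψ lam π) lamn)
    (hcont₄ : ContinuousAt (fun lam => φ lam π) lamn)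
    (γn : ℝ)
    (hγn : γn = (∫ x in (0:ℝ)..π, (φ lamn x) ^ 2) +
      (φx lamn π + H * φ lamn π) ^ 2 / (H * H₁ - H₂)) :
    HasDerivAt Φ (γn * Ψ lamn / (h - ht)) lamn := by
  have hq : IntegrableOn q (Set.Icc 0 π) := by
    have hbd : IntegrableOn (fun t => ((q t) ^ 2 + 1) / 2) (Set.Icc 0 π) :=
      (hq_L2.add (integrableOn_const isCompact_Icc.measure_lt_top.ne)).div_const 2
    have hm : AEStronglyMeasurable q (volume.restrict (Set.Icc 0 π)) :=
      hq_meas.aestronglyMeasurable.restrict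
    refine Integrable.mono' hbd hm (Filter.Eventually.of_forall fun t => ?_)
    rw [Real.norm_eq_abs]
    nlinarith [sq_nonneg (|q t| - 1), sq_abs (q t)]
  have hhht : h - ht ≠ 0 := sub_ne_zero.2 hht
  have hρ0 : H * H₁ - H₂ ≠ 0 := ne_of_gt hρ
  have hlH : lamn - H₁ ≠ 0 := sub_ne_zero.2 hH₁n
  -- Wronskian identities
  have W1 : ∀ lam : ℝ, φx lam π * φ lamn π - φ lam π * φx lamn π
      = (lamn - lam) * ∫ x in (0:ℝ)..π, φ lam x * φ lamn x := by
    intro lam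
    have hw := wron q hq_meas hq lam lamn (φ lam) (φx lam) (φ lamn) (φx lamn) (hφ lam) (hφ lamn)
    rw [hφ0, hφ0, hφx0, hφx0] at hw
    linarith [hw]
  have W2 : ψx lamn π * φ lamn π - ψ lamn π * φx lamn π = ht - h := by
    have hw := wron q hq_meas hq lamn lamn (ψ lamn) (ψx lamn) (φ lamn) (φx lamn)
      (hψ lamn) (hφ lamn)
    rw [hψ0, hφ0, hψx0, hφx0] at hw
    simp only [sub_self, zero_mul] at hw
    linarith [hw]
  have E : lamn * (φx lamn π + H * φ lamn π) - H₁ * φx lamn π - H₂ * φ lamn π = 0 := by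
    rw [← hΦ lamn]; exact hΦn
  have ha0 : φ lamn π ≠ 0 := by
    intro h0
    have ha' : φx lamn π = 0 := by
      rw [h0] at E
      have : (lamn - H₁) * φx lamn π = 0 := by linarith [E]
      exact (mul_eq_zero.1 this).resolve_left hlH
    rw [h0, ha'] at W2
    simp at W2
    exact hht (by linarith)
  -- the auxiliary function g
  set g : ℝ → ℝ := fun lam =>
    (φ lam π * (φx lamn π + H * φ lamn π)
      - (lam - H₁) * ∫ x in (0:ℝ)..π, φ lam x * φ lamn x) / φ lamn π with hg
  have key : ∀ lam : ℝ, Φ lam = (lam - lamn) * g lam := by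
    intro lam
    rw [hΦ lam, hg]
    rw [mul_div_assoc', eq_div_iff ha0]
    linear_combination (lam - H₁) * W1 lam + φ lam π * E
  have gln : g lamn = γn * Ψ lamn / (h - ht) := by
    have hJn : (∫ x in (0:ℝ)..π, φ lamn x * φ lamn x) = ∫ x in (0:ℝ)..π, (φ lamn x) ^ 2 := by
      congr 1; funext x; ring
    have P := hΨ lamn
    set S := ∫ x in (0:ℝ)..π, (φ lamn x) ^ 2 with hS
    set X := φx lamn π + H * φ lamn π with hX
    have T : φ lamn π * Ψ lamn = (lamn - H₁) * (ht - h) := by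
      linear_combination φ lamn π * P + (lamn - H₁) * W2 + ψ lamn π * E
    have U : (lamn - H₁) * X = -((H * H₁ - H₂) * φ lamn π) := by
      rw [hX]; linear_combination E
    have goal' : (φ lamn π * X - (lamn - H₁) * S) * (h - ht) * (H * H₁ - H₂)
        = (S * (H * H₁ - H₂) + X ^ 2) * Ψ lamn * φ lamn π := by
      linear_combination (-(S * (H * H₁ - H₂) + X ^ 2)) * T - X * (ht - h) * U
    rw [hg]
    simp only []
    rw [hJn, hγn, div_eq_div_iff ha0 hhht]
    field_simp
    have hρ' : H₁ * H - H₂ ≠ 0 := by rw [mul_comm]; exact hρ0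
    field_simp
    linear_combination goal'
  -- conclude
  rw [← gln]
  rw [hasDerivAt_iff_tendsto_slope]
  have hgc : ContinuousAt g lamn := by
    rw [hg]
    exact ((hcont₄.mul continuousAt_const).sub
      ((continuousAt_id.sub continuousAt_const).mul hcont₂)).div_const _
  refine (hgc.continuousWithinAt.tendsto).congr' ?_
  filter_upwards [self_mem_nhdsWithin] with lam hlam
  have hne : lam - lamn ≠ 0 := sub_ne_zero.2 hlam
  rw [slope_def_field, key lam, hΦn, sub_zero, mul_comm, mul_div_assoc,
    div_self hne, mul_one]
end
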